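/- arXiv:1404.7067 — 3 statements merged into one kernel-verified Lean document; each statement's English description precedes it below -/
import Mathlib

section
/- For every weak Dynamic Time Petri Net N (i.e., a DTPN whose dynamic interval function Id is trivial) that has a finite set of reachable markings, there exists a Time Petri Net N' together with a labelling of the transitions of N' by T ∪ {τ̂} (τ̂ silent) such that the state graph of N (with each discrete transition labelled by the transition fired and each delay transition by its duration) and the state graph of N' (with each discrete transition labelled by the label of the transition fired) are weakly timed bisimilar. -/
open scoped Classical

noncomputable section

/-- A time interval: the closed interval `[lo, hi]` (with `hi` possibly `∞`,
in which case the interval is `[lo, ∞)`), with nonnegative left endpoint. -/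
structure TimeInterval where
  lo : ℝ
  hi : EReal
  lo_nonneg : 0 ≤ lo
  lo_le_hi : (lo : EReal) ≤ hi

/-- Membership in a time interval. -/
def TimeInterval.mem (I : TimeInterval) (x : ℝ) : Prop :=
  I.lo ≤ x ∧ (x : EReal) ≤ I.hi

/-- A Dynamic Time Petri Net over places `P` and transitions `T`:
precondition and postcondition functions, initial marking, static interval
function `Is` and dynamic interval function `Idyn`. -/
structure DTPN (P T : Type) where
  Pre : T → P → ℕ
  Post : T → P → ℕ
  m0 : P → ℕ
  Is : T → (P → ℕ) → TimeInterval
  Idyn : T → (P → ℕ) → ℝ → TimeInterval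

variable {P T P' T' : Type}

/-- `t` is enabled at marking `m`. -/
def enabled (N : DTPN P T) (m : P → ℕ) (t : T) : Prop :=
  ∀ p, N.Pre t p ≤ m p

/-- The marking obtained by firing `t` from `m`: `m - Pre(t) + Post(t)`. -/
def fire (N : DTPN P T) (m : P → ℕ) (t : T) : P → ℕ :=
  fun p => m p - N.Pre t p + N.Post t p

/-- `k` is persistent when `t` fires from `m`. -/
def pers (N : DTPN P T) (m : P → ℕ) (t k : T) : Prop :=
  k ≠ t ∧ enabled N m k ∧ ∀ p, N.Pre k p ≤ m p - N.Pre t p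

/-- `k` is newly enabled when `t` fires from `m`. -/
def nenabl (N : DTPN P T) (m : P → ℕ) (t k : T) : Prop :=
  (¬ enabled N m k ∨ k = t) ∧ enabled N (fire N m t) k

/-- A state of a net: a marking together with a firing function.  The firing
function is represented as a total function that is (by convention) `0` on
transitions that are not enabled. -/
abbrev NState (P T : Type) := (P → ℕ) × (T → ℝ)

/-- Initial states of a net. -/
def initState (N : DTPN P T) (s : NState P T) : Prop :=
  s.1 = N.m0 ∧ (∀ t, enabled N N.m0 t → (N.Is t N.m0).mem (s.2 t)) ∧
    ∀ t, ¬ enabled N N.m0 t → s.2 t = 0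

/-- Discrete transition: `t` fires from `s` leading to `s'`. -/
def discStep (N : DTPN P T) (s : NState P T) (t : T) (s' : NState P T) : Prop :=
  enabled N s.1 t ∧ s.2 t = 0 ∧ s'.1 = fire N s.1 t ∧
  (∀ k, pers N s.1 t k → (N.Idyn k s'.1 (s.2 k)).mem (s'.2 k)) ∧
  (∀ k, enabled N s'.1 k → ¬ pers N s.1 t k → (N.Is k s'.1).mem (s'.2 k)) ∧
  ∀ k, ¬ enabled N s'.1 k → s'.2 k = 0

/-- Delay (time elapsing) transition of duration `θ`. -/
def delayStep (N : DTPN P T) (s : NState P T) (θ : ℝ) (s' : NState P T) : Prop :=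
  0 ≤ θ ∧ (∀ k, enabled N s.1 k → θ ≤ s.2 k) ∧ s'.1 = s.1 ∧
  s'.2 = fun k => if enabled N s.1 k then s.2 k - θ else 0

/-- Labels of a timed transition system: a discrete transition in `T`,
a delay in `ℝ≥0`, or the silent label `τ̂`. -/
inductive TLabel (T : Type) where
  | disc : T → TLabel T
  | delay : ℝ → TLabel T
  | silent : TLabel T

/-- A timed transition system. -/
structure TTS (S L : Type) where
  init : Set S
  step : S → L → S → Prop

/-- Reachability in a timed transition system. -/
def TTS.Reach {S L : Type} (A : TTS S L) (s : S) : Prop :=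
  ∃ s0 ∈ A.init, Relation.ReflTransGen (fun x y => ∃ l, A.step x l y) s0 s

/-- Reflexive-transitive closure of silent steps. -/
def silentSteps {S : Type} (A : TTS S (TLabel T)) : S → S → Prop :=
  Relation.ReflTransGen fun x y => A.step x TLabel.silent y

/-- Weak transition `s ⇒α s'` : `(→τ̂)* →α` for `α ≠ τ̂` and `(→τ̂)*` for `α = τ̂`. -/
def weakStep {S : Type} (A : TTS S (TLabel T)) (s : S) (α : TLabel T) (s' : S) : Prop :=
  match α with
  | TLabel.silent => silentSteps A s s'
  | α => ∃ s₁, silentSteps A s s₁ ∧ A.step s₁ α s'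

/-- `R` is a weak timed simulation of `A` by `B`. -/
def WeakSim {S₁ S₂ : Type} (A : TTS S₁ (TLabel T)) (B : TTS S₂ (TLabel T))
    (R : S₁ → S₂ → Prop) : Prop :=
  ∀ s₁ α s₁', A.step s₁ α s₁' → ∀ s₂, R s₁ s₂ →
    ∃ s₂', weakStep B s₂ α s₂' ∧ R s₁' s₂'

/-- `A` and `B` are weakly timed bisimilar: there is a relation `R`, relating
the initial states of the two systems, such that both `R` and `R⁻¹` are weak
timed simulations. -/
def Bisimilar {S₁ S₂ : Type} (A : TTS S₁ (TLabel T)) (B : TTS S₂ (TLabel T)) : Prop :=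
  ∃ R : S₁ → S₂ → Prop,
    WeakSim A B R ∧ WeakSim B A (fun y x => R x y) ∧
    (∀ s₁ ∈ A.init, ∃ s₂ ∈ B.init, R s₁ s₂) ∧
    (∀ s₂ ∈ B.init, ∃ s₁ ∈ A.init, R s₁ s₂)

/-- The state graph of a net: discrete transitions are labelled by the
transition fired, delay transitions by their duration; no silent steps. -/
def SG (N : DTPN P T) : TTS (NState P T) (TLabel T) where
  init := {s | initState N s}
  step := fun s α s' =>
    match α with
    | TLabel.disc t => discStep N s t s'
    | TLabel.delay θ => delayStep N s θ s'
    | TLabel.silent => False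

/-- The state graph of a net whose transitions are labelled by `T ∪ {τ̂}`
through `ℓ` (`none` = silent). -/
def labelledSG (N : DTPN P' T') (ℓ : T' → Option T) :
    TTS (NState P' T') (TLabel T) where
  init := {s | initState N s}
  step := fun s α s' =>
    match α with
    | TLabel.disc t => ∃ t', ℓ t' = some t ∧ discStep N s t' s'
    | TLabel.delay θ => delayStep N s θ s'
    | TLabel.silent => ∃ t', ℓ t' = none ∧ discStep N s t' s'

/-- The dynamic interval function is trivial : `Idyn(t,m,θ) = [θ,θ]`. -/
def TrivialIdyn (N : DTPN P T) : Prop :=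
  ∀ t m θ x, 0 ≤ θ → ((N.Idyn t m θ).mem x ↔ x = θ)

/-- A Time Petri Net: a DTPN whose dynamic interval function is trivial and
whose static interval function does not depend on the marking. -/
def IsTPN (N : DTPN P T) : Prop :=
  TrivialIdyn N ∧ ∀ t m m', N.Is t m = N.Is t m'

/-- `N` has a finite set of reachable markings. -/
def FiniteMarkings (N : DTPN P T) : Prop :=
  {m : P → ℕ | ∃ τ, (SG N).Reach (m, τ)}.Finite

namespace WDTPN

variable {P T : Type}

/-- The set of reachable markings of `N`. -/
def Msk (N : DTPN P T) : Set (P → ℕ) := {m : P → ℕ | ∃ τ, (SG N).Reach (m, τ)}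

/-- Reachable markings as a type. -/
abbrev MM (N : DTPN P T) := {m : P → ℕ // m ∈ Msk N}

/-- Places of the constructed TPN. -/
abbrev Pl (N : DTPN P T) := MM N ⊕ ((T × MM N) ⊕ T)

/-- Transitions of the constructed TPN. -/
abbrev Tr (N : DTPN P T) := (T × MM N) ⊕ (T × MM N × (T → MM N) × (T → Bool))

/-- Transitions removed (disabled or re-newly-enabled) when `t` fires at `m`. -/
def Cset (N : DTPN P T) (t : T) (m : P → ℕ) : Set T :=
  {k | k ≠ t ∧ enabled N m k ∧ ¬ pers N m t k}

/-- Transitions newly enabled when `t` fires at `m`. -/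
def Aset (N : DTPN P T) (t : T) (m : P → ℕ) : Set T :=
  {k | enabled N (fire N m t) k ∧ ¬ pers N m t k}

def PreB (N : DTPN P T) : Tr N → Pl N → ℕ
  | .inl _, .inl _ => 0
  | .inl (t, mh), .inr (.inl (k, mh')) => if k = t ∧ mh' = mh then 1 else 0
  | .inl _, .inr (.inr _) => 0
  | .inr (t, mc, _, _), .inl m' => if m' = mc then 1 else 0
  | .inr (t, mc, g, b), .inr (.inl (k, mh')) =>
      if k ∈ Cset N t mc.val ∧ b k = false ∧ mh' = g k then 1 else 0
  | .inr (t, mc, _, b), .inr (.inr k) =>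
      if k = t ∨ (k ∈ Cset N t mc.val ∧ b k = true) then 1 else 0

def PostB (N : DTPN P T) : Tr N → Pl N → ℕ
  | .inl _, .inl _ => 0
  | .inl _, .inr (.inl _) => 0
  | .inl (t, _), .inr (.inr k) => if k = t then 1 else 0
  | .inr (t, mc, _, _), .inl m' => if m'.val = fire N mc.val t then 1 else 0
  | .inr (t, mc, _, _), .inr (.inl (k, mh')) =>
      if k ∈ Aset N t mc.val ∧ mh'.val = fire N mc.val t then 1 else 0
  | .inr _, .inr (.inr _) => 0

def m0B (N : DTPN P T) : Pl N → ℕ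
  | .inl m' => if m'.val = N.m0 then 1 else 0
  | .inr (.inl (k, mh')) => if enabled N N.m0 k ∧ mh'.val = N.m0 then 1 else 0
  | .inr (.inr _) => 0

/-- The singleton interval `[max x 0, max x 0]`. -/
def ptIv (x : ℝ) : TimeInterval :=
  ⟨max x 0, ((max x 0 : ℝ) : EReal), le_max_right _ _, le_refl _⟩

lemma mem_ptIv {x y : ℝ} : (ptIv x).mem y ↔ y = max x 0 := by
  simp only [ptIv, TimeInterval.mem, EReal.coe_le_coe_iff]
  constructor
  · rintro ⟨h1, h2⟩; linarith
  · rintro rfl; exact ⟨le_rfl, le_rfl⟩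

lemma mem_ptIv' {x y : ℝ} (hx : 0 ≤ x) : (ptIv x).mem y ↔ y = x := by
  rw [mem_ptIv, max_eq_left hx]

def IsB (N : DTPN P T) : Tr N → TimeInterval
  | .inl (t, mh) => N.Is t mh.val
  | .inr _ => ptIv 0

/-- The constructed TPN. -/
def NB (N : DTPN P T) : DTPN (Pl N) (Tr N) where
  Pre := PreB N
  Post := PostB N
  m0 := m0B N
  Is := fun tr _ => IsB N tr
  Idyn := fun _ _ θ => ptIv θ

/-- The labelling. -/
def lab (N : DTPN P T) : Tr N → Option T
  | .inl _ => none
  | .inr (t, _, _, _) => some t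

lemma NB_isTPN (N : DTPN P T) : IsTPN (NB N) := by
  constructor
  · intro t m θ x hθ
    exact mem_ptIv' hθ
  · intro t m m'; rfl

/-- marking encoding -/
def encM (N : DTPN P T) (mm : MM N) (h : T → MM N) (F : Set T) : Pl N → ℕ
  | .inl m' => if m' = mm then 1 else 0
  | .inr (.inl (k, mh)) => if enabled N mm.val k ∧ k ∉ F ∧ mh = h k then 1 else 0
  | .inr (.inr k) => if k ∈ F then 1 else 0

/-- clock encoding -/
def encC (N : DTPN P T) (mm : MM N) (h : T → MM N) (F : Set T) (τ : T → ℝ) : Tr N → ℝ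
  | .inl (k, mh) => if enabled N mm.val k ∧ k ∉ F ∧ mh = h k then τ k else 0
  | .inr _ => 0

/-- The bisimulation relation. -/
def Rel (N : DTPN P T) (s₁ : NState P T) (s₂ : NState (Pl N) (Tr N)) : Prop :=
  ∃ (mm : MM N) (h : T → MM N) (F : Set T),
    s₁.1 = mm.val ∧
    (SG N).Reach s₁ ∧
    (∀ k, enabled N s₁.1 k → 0 ≤ s₁.2 k) ∧
    (∀ k, ¬ enabled N s₁.1 k → s₁.2 k = 0) ∧
    (∀ t ∈ F, enabled N s₁.1 t ∧ s₁.2 t = 0) ∧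
    s₂.1 = encM N mm h F ∧
    s₂.2 = encC N mm h F s₁.2

end WDTPN
namespace WDTPN

variable {P T : Type} {N : DTPN P T}

-- precise equation lemmas
lemma preC_mark (t : T) (mh m' : MM N) :
    (NB N).Pre (Sum.inl (t, mh)) (Sum.inl m') = 0 := rfl
lemma preC_track (t : T) (mh : MM N) (k : T) (mh' : MM N) :
    (NB N).Pre (Sum.inl (t, mh)) (Sum.inr (Sum.inl (k, mh'))) =
      if k = t ∧ mh' = mh then 1 else 0 := rfl
lemma preC_buf (t : T) (mh : MM N) (k : T) :
    (NB N).Pre (Sum.inl (t, mh)) (Sum.inr (Sum.inr k)) = 0 := rfl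
lemma preR_mark (t : T) (mc : MM N) (g : T → MM N) (b : T → Bool) (m' : MM N) :
    (NB N).Pre (Sum.inr (t, mc, g, b)) (Sum.inl m') = if m' = mc then 1 else 0 := rfl
lemma preR_track (t : T) (mc : MM N) (g : T → MM N) (b : T → Bool) (k : T) (mh' : MM N) :
    (NB N).Pre (Sum.inr (t, mc, g, b)) (Sum.inr (Sum.inl (k, mh'))) =
      if k ∈ Cset N t mc.val ∧ b k = false ∧ mh' = g k then 1 else 0 := rfl
lemma preR_buf (t : T) (mc : MM N) (g : T → MM N) (b : T → Bool) (k : T) :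
    (NB N).Pre (Sum.inr (t, mc, g, b)) (Sum.inr (Sum.inr k)) =
      if k = t ∨ (k ∈ Cset N t mc.val ∧ b k = true) then 1 else 0 := rfl

lemma postC_mark (t : T) (mh m' : MM N) :
    (NB N).Post (Sum.inl (t, mh)) (Sum.inl m') = 0 := rfl
lemma postC_track (t : T) (mh : MM N) (k : T) (mh' : MM N) :
    (NB N).Post (Sum.inl (t, mh)) (Sum.inr (Sum.inl (k, mh'))) = 0 := rfl
lemma postC_buf (t : T) (mh : MM N) (k : T) :
    (NB N).Post (Sum.inl (t, mh)) (Sum.inr (Sum.inr k)) = if k = t then 1 else 0 := rfl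
lemma postR_mark (t : T) (mc : MM N) (g : T → MM N) (b : T → Bool) (m' : MM N) :
    (NB N).Post (Sum.inr (t, mc, g, b)) (Sum.inl m') =
      if m'.val = fire N mc.val t then 1 else 0 := rfl
lemma postR_track (t : T) (mc : MM N) (g : T → MM N) (b : T → Bool) (k : T) (mh' : MM N) :
    (NB N).Post (Sum.inr (t, mc, g, b)) (Sum.inr (Sum.inl (k, mh'))) =
      if k ∈ Aset N t mc.val ∧ mh'.val = fire N mc.val t then 1 else 0 := rfl
lemma postR_buf (t : T) (mc : MM N) (g : T → MM N) (b : T → Bool) (k : T) :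
    (NB N).Post (Sum.inr (t, mc, g, b)) (Sum.inr (Sum.inr k)) = 0 := rfl

lemma encM_mark (mm : MM N) (h : T → MM N) (F : Set T) (m' : MM N) :
    encM N mm h F (Sum.inl m') = if m' = mm then 1 else 0 := rfl
lemma encM_track (mm : MM N) (h : T → MM N) (F : Set T) (k : T) (mh : MM N) :
    encM N mm h F (Sum.inr (Sum.inl (k, mh))) =
      if enabled N mm.val k ∧ k ∉ F ∧ mh = h k then 1 else 0 := rfl
lemma encM_buf (mm : MM N) (h : T → MM N) (F : Set T) (k : T) :
    encM N mm h F (Sum.inr (Sum.inr k)) = if k ∈ F then 1 else 0 := rfl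

lemma encC_commit (mm : MM N) (h : T → MM N) (F : Set T) (τ : T → ℝ) (k : T) (mh : MM N) :
    encC N mm h F τ (Sum.inl (k, mh)) =
      if enabled N mm.val k ∧ k ∉ F ∧ mh = h k then τ k else 0 := rfl
lemma encC_reorg (mm : MM N) (h : T → MM N) (F : Set T) (τ : T → ℝ)
    (x : T × MM N × (T → MM N) × (T → Bool)) :
    encC N mm h F τ (Sum.inr x) = 0 := rfl

lemma m0B_mark (N : DTPN P T) (m' : MM N) :
    (NB N).m0 (Sum.inl m') = if m'.val = N.m0 then 1 else 0 := rfl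
lemma m0B_track (N : DTPN P T) (k : T) (mh' : MM N) :
    (NB N).m0 (Sum.inr (Sum.inl (k, mh'))) =
      if enabled N N.m0 k ∧ mh'.val = N.m0 then 1 else 0 := rfl
lemma m0B_buf (N : DTPN P T) (k : T) : (NB N).m0 (Sum.inr (Sum.inr k)) = 0 := rfl

lemma NB_Is (N : DTPN P T) (tr : Tr N) (m : Pl N → ℕ) :
    (NB N).Is tr m = IsB N tr := rfl
lemma NB_Idyn (N : DTPN P T) (tr : Tr N) (m : Pl N → ℕ) (θ : ℝ) :
    (NB N).Idyn tr m θ = ptIv θ := rfl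
lemma IsB_commit (N : DTPN P T) (t : T) (mh : MM N) :
    IsB N (Sum.inl (t, mh)) = N.Is t mh.val := rfl
lemma IsB_reorg (N : DTPN P T) (x : T × MM N × (T → MM N) × (T → Bool)) :
    IsB N (Sum.inr x) = ptIv 0 := rfl

lemma fireB (X : Pl N → ℕ) (tr : Tr N) (pl : Pl N) :
    fire (NB N) X tr pl = X pl - (NB N).Pre tr pl + (NB N).Post tr pl := rfl

lemma mem_nonneg {I : TimeInterval} {x : ℝ} (hx : I.mem x) : 0 ≤ x :=
  le_trans I.lo_nonneg hx.1

lemma lo_mem (I : TimeInterval) : I.mem I.lo := ⟨le_rfl, I.lo_le_hi⟩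

lemma pers_enab_after {m : P → ℕ} {t k : T} (hp : pers N m t k) :
    enabled N (fire N m t) k := fun p =>
  le_trans (hp.2.2 p) (Nat.le_add_right _ _)

lemma pers_not_self {m : P → ℕ} {t : T} : ¬ pers N m t t := fun hp => hp.1 rfl

lemma not_mem_Cset_self {t : T} {m : P → ℕ} : t ∉ Cset N t m := fun hc => hc.1 rfl

lemma pers_of_not_Cset {m : P → ℕ} {k t : T} (he : enabled N m k) (hk : k ≠ t)
    (hnc : k ∉ Cset N t m) : pers N m t k := by
  by_contra hnp; exact hnc ⟨hk, he, hnp⟩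

lemma pers_not_Aset {m : P → ℕ} {t k : T} (hp : pers N m t k) : k ∉ Aset N t m :=
  fun ha => ha.2 hp

lemma pers_not_Cset {m : P → ℕ} {t k : T} (hp : pers N m t k) : k ∉ Cset N t m :=
  fun hc => hc.2.2 hp

lemma silentA {s s' : NState P T} (h : silentSteps (SG N) s s') : s' = s := by
  induction h with
  | refl => rfl
  | tail _ h2 _ => exact False.elim h2

lemma reach_tail {s s' : NState P T} (h : (SG N).Reach s) {l : TLabel T}
    (hs : (SG N).step s l s') : (SG N).Reach s' := by
  obtain ⟨s0, h0, hr⟩ := h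
  exact ⟨s0, h0, hr.tail ⟨l, hs⟩⟩

lemma m0_mem (N : DTPN P T) : N.m0 ∈ Msk N := by
  refine ⟨fun t => if enabled N N.m0 t then (N.Is t N.m0).lo else 0,
    (N.m0, fun t => if enabled N N.m0 t then (N.Is t N.m0).lo else 0),
    ⟨rfl, ?_, ?_⟩, Relation.ReflTransGen.refl⟩
  · intro t ht
    show (N.Is t N.m0).mem (if enabled N N.m0 t then (N.Is t N.m0).lo else 0)
    rw [if_pos ht]; exact lo_mem _
  · intro t ht
    show (if enabled N N.m0 t then (N.Is t N.m0).lo else 0) = 0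
    rw [if_neg ht]

lemma Astep_exists (hweak : TrivialIdyn N) {m : P → ℕ} {τ : T → ℝ} {t : T}
    (he : enabled N m t) (ht : τ t = 0)
    (hnn : ∀ k, enabled N m k → 0 ≤ τ k) :
    discStep N (m, τ) t
      (fire N m t, fun k => if pers N m t k then τ k
        else if enabled N (fire N m t) k then (N.Is k (fire N m t)).lo else 0) := by
  refine ⟨he, ht, rfl, ?_, ?_, ?_⟩
  · intro k hk
    show (N.Idyn k _ (τ k)).mem
      (if pers N m t k then τ k
        else if enabled N (fire N m t) k then (N.Is k (fire N m t)).lo else 0)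
    rw [if_pos hk]
    exact (hweak k (fire N m t) (τ k) (τ k) (hnn k hk.2.1)).mpr rfl
  · intro k hk hnp
    show (N.Is k _).mem
      (if pers N m t k then τ k
        else if enabled N (fire N m t) k then (N.Is k (fire N m t)).lo else 0)
    rw [if_neg hnp, if_pos hk]
    exact lo_mem _
  · intro k hk
    show (if pers N m t k then τ k
        else if enabled N (fire N m t) k then (N.Is k (fire N m t)).lo else 0) = 0
    rw [if_neg (fun hp => hk (pers_enab_after hp)), if_neg hk]

/-- enabledness of a commit copy at an encoded marking. -/
lemma en_commit {mm : MM N} {h : T → MM N} {F : Set T} {k : T} {mh : MM N} :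
    enabled (NB N) (encM N mm h F) (Sum.inl (k, mh)) ↔
      (enabled N mm.val k ∧ k ∉ F ∧ mh = h k) := by
  constructor
  · intro he
    by_cases hc : enabled N mm.val k ∧ k ∉ F ∧ mh = h k
    · exact hc
    · exfalso
      have h1 := he (Sum.inr (Sum.inl (k, mh)))
      rw [preC_track, encM_track, if_pos ⟨rfl, rfl⟩, if_neg hc] at h1
      omega
  · rintro hc pl
    rcases pl with m' | ⟨k', mh'⟩ | kk
    · rw [preC_mark]; exact Nat.zero_le _
    · rw [preC_track, encM_track]
      by_cases hx : k' = k ∧ mh' = mh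
      · obtain ⟨rfl, rfl⟩ := hx
        rw [if_pos ⟨rfl, rfl⟩, if_pos hc]
      · rw [if_neg hx]; exact Nat.zero_le _
    · rw [preC_buf]; exact Nat.zero_le _

lemma en_reorg_elim {mm : MM N} {h : T → MM N} {F : Set T} {t : T} {mc : MM N}
    {g : T → MM N} {b : T → Bool}
    (he : enabled (NB N) (encM N mm h F) (Sum.inr (t, mc, g, b))) :
    mc = mm ∧ t ∈ F ∧
      ∀ k, k ∈ Cset N t mm.val →
        ((b k = false → enabled N mm.val k ∧ k ∉ F ∧ g k = h k) ∧
         (b k = true → k ∈ F)) := by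
  have hmc : mc = mm := by
    by_contra hne
    have h1 := he (Sum.inl mc)
    rw [preR_mark, encM_mark, if_pos rfl, if_neg hne] at h1
    omega
  subst hmc
  have htF : t ∈ F := by
    by_contra hne
    have h1 := he (Sum.inr (Sum.inr t))
    rw [preR_buf, encM_buf, if_pos (Or.inl rfl), if_neg hne] at h1
    omega
  refine ⟨rfl, htF, ?_⟩
  intro k hk
  constructor
  · intro hb
    by_cases hc : enabled N mc.val k ∧ k ∉ F ∧ g k = h k
    · exact hc
    · exfalso
      have h1 := he (Sum.inr (Sum.inl (k, g k)))
      rw [preR_track, encM_track, if_pos ⟨hk, hb, rfl⟩, if_neg hc] at h1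
      omega
  · intro hb
    by_contra hne
    have h1 := he (Sum.inr (Sum.inr k))
    rw [preR_buf, encM_buf, if_pos (Or.inr ⟨hk, hb⟩), if_neg hne] at h1
    omega

/-- the canonical reorg copy is enabled. -/
lemma en_reorg_true {mm : MM N} {h : T → MM N} {F : Set T} {t : T}
    (htF : t ∈ F) (hpend : ∀ k ∈ F, enabled N mm.val k) :
    enabled (NB N) (encM N mm h F)
      (Sum.inr (t, mm, h, fun k => if k ∈ F then true else false)) := by
  intro pl
  rcases pl with m' | ⟨k, mh⟩ | k
  · rw [preR_mark, encM_mark]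
  · rw [preR_track, encM_track]
    by_cases hc : k ∈ Cset N t mm.val ∧
        (if k ∈ F then true else false) = false ∧ mh = h k
    · obtain ⟨hkC, hbf, rfl⟩ := hc
      have hkF : k ∉ F := by
        intro hkF; rw [if_pos hkF] at hbf; simp at hbf
      rw [if_pos ⟨hkC, hbf, rfl⟩, if_pos ⟨hkC.2.1, hkF, rfl⟩]
    · rw [if_neg hc]; exact Nat.zero_le _
  · rw [preR_buf, encM_buf]
    by_cases hc : k = t ∨ (k ∈ Cset N t mm.val ∧
        (if k ∈ F then true else false) = true)
    · have hkF : k ∈ F := by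
        rcases hc with rfl | ⟨_, hb⟩
        · exact htF
        · by_contra hkF; rw [if_neg hkF] at hb; simp at hb
      rw [if_pos hc, if_pos hkF]
    · rw [if_neg hc]; exact Nat.zero_le _

end WDTPN
namespace WDTPN

variable {P T : Type} {N : DTPN P T}

def hNew (N : DTPN P T) (t : T) (m : P → ℕ) (mn : MM N) (h : T → MM N) : T → MM N :=
  fun k => if k ∈ Aset N t m then mn else h k

def Fnew (N : DTPN P T) (t : T) (m : P → ℕ) (F : Set T) : Set T :=
  {k | k ∈ F ∧ k ≠ t ∧ k ∉ Cset N t m}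

lemma hNew_eq (t : T) (m : P → ℕ) (mn : MM N) (h : T → MM N) (k : T) :
    hNew N t m mn h k = if k ∈ Aset N t m then mn else h k := rfl

lemma mem_Fnew {t : T} {m : P → ℕ} {F : Set T} {k : T} :
    k ∈ Fnew N t m F ↔ (k ∈ F ∧ k ≠ t ∧ k ∉ Cset N t m) := Iff.rfl

/-- firing a commit copy from an encoded marking. -/
lemma fire_commit {mm : MM N} {h : T → MM N} {F : Set T} {t : T} (htF : t ∉ F) :
    fire (NB N) (encM N mm h F) (Sum.inl (t, h t)) = encM N mm h (F ∪ {t}) := by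
  funext pl
  rcases pl with m' | ⟨k, mh⟩ | k
  · rw [fireB, preC_mark, postC_mark, Nat.sub_zero, Nat.add_zero, encM_mark, encM_mark]
  · rw [fireB, preC_track, postC_track, Nat.add_zero, encM_track, encM_track]
    by_cases hkt : k = t
    · subst hkt
      rw [if_neg (show ¬ (enabled N mm.val k ∧ k ∉ F ∪ {k} ∧ mh = h k) from
        fun hx => hx.2.1 (Or.inr rfl))]
      by_cases hmh : mh = h k
      · rw [if_pos (show k = k ∧ mh = h k from ⟨rfl, hmh⟩)]
        by_cases hc : enabled N mm.val k ∧ k ∉ F ∧ mh = h k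
        · rw [if_pos hc]
        · rw [if_neg hc]
      · rw [if_neg (show ¬ (k = k ∧ mh = h k) from fun hx => hmh hx.2),
          if_neg (show ¬ (enabled N mm.val k ∧ k ∉ F ∧ mh = h k) from
            fun hx => hmh hx.2.2)]
    · rw [if_neg (show ¬ (k = t ∧ mh = h t) from fun hx => hkt hx.1), Nat.sub_zero]
      by_cases hc : enabled N mm.val k ∧ k ∉ F ∧ mh = h k
      · rw [if_pos hc, if_pos (show enabled N mm.val k ∧ k ∉ F ∪ {t} ∧ mh = h k from
          ⟨hc.1, fun hx => Or.elim hx hc.2.1 hkt, hc.2.2⟩)]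
      · rw [if_neg hc, if_neg (show ¬ (enabled N mm.val k ∧ k ∉ F ∪ {t} ∧ mh = h k) from
          fun hx => hc ⟨hx.1, fun hf => hx.2.1 (Or.inl hf), hx.2.2⟩)]
  · rw [fireB, preC_buf, postC_buf, Nat.sub_zero, encM_buf, encM_buf]
    by_cases hkt : k = t
    · subst hkt
      rw [if_neg htF, if_pos (show k = k from rfl),
        if_pos (show k ∈ F ∪ {k} from Or.inr rfl)]
    · rw [if_neg hkt, Nat.add_zero]
      by_cases hkF : k ∈ F
      · rw [if_pos hkF, if_pos (show k ∈ F ∪ {t} from Or.inl hkF)]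
      · rw [if_neg hkF, if_neg (show k ∉ F ∪ {t} from fun hx => Or.elim hx hkF hkt)]

/-- firing a reorg copy from an encoded marking. -/
lemma fire_reorg {mm : MM N} {h : T → MM N} {F : Set T} {t : T}
    {g : T → MM N} {b : T → Bool}
    (htF : t ∈ F) (hpendE : ∀ k ∈ F, enabled N mm.val k)
    (hbf : ∀ k, k ∈ Cset N t mm.val → b k = false →
      (enabled N mm.val k ∧ k ∉ F ∧ g k = h k))
    (hbt : ∀ k, k ∈ Cset N t mm.val → b k = true → k ∈ F)
    (mn : MM N) (hmn : mn.val = fire N mm.val t) :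
    fire (NB N) (encM N mm h F) (Sum.inr (t, mm, g, b)) =
      encM N mn (hNew N t mm.val mn h) (Fnew N t mm.val F) := by
  have hval : ∀ x : MM N, (x = mn) ↔ (x.val = fire N mm.val t) := by
    intro x
    constructor
    · rintro rfl; exact hmn
    · intro hv; exact Subtype.ext (hv.trans hmn.symm)
  funext pl
  rcases pl with m' | ⟨k, mh⟩ | k
  · rw [fireB, preR_mark, postR_mark, encM_mark, encM_mark]
    by_cases h2 : m'.val = fire N mm.val t
    · rw [if_pos h2, if_pos ((hval m').mpr h2)]
      by_cases h1 : m' = mm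
      · rw [if_pos h1]
      · rw [if_neg h1]
    · rw [if_neg h2, if_neg (show ¬ (m' = mn) from fun hx => h2 ((hval m').mp hx))]
      by_cases h1 : m' = mm
      · rw [if_pos h1]
      · rw [if_neg h1]
  · rw [fireB, preR_track, postR_track, encM_track, encM_track]
    by_cases hA : k ∈ Aset N t mm.val
    · -- k is newly enabled: any old token is consumed, a new one appears at mn
      have hnF : k ∉ Fnew N t mm.val F := by
        rintro ⟨hkF, hkt, hkC⟩
        exact hA.2 (pers_of_not_Cset (hpendE k hkF) hkt hkC)
      have hstep1 : (if enabled N mm.val k ∧ k ∉ F ∧ mh = h k then 1 else 0)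
          - (if k ∈ Cset N t mm.val ∧ b k = false ∧ mh = g k then 1 else 0) = 0 := by
        by_cases hc : enabled N mm.val k ∧ k ∉ F ∧ mh = h k
        · have hkt : k ≠ t := fun he => hc.2.1 (he ▸ htF)
          have hkC : k ∈ Cset N t mm.val := ⟨hkt, hc.1, hA.2⟩
          have hb : b k = false := by
            cases hbk : b k
            · rfl
            · exact absurd (hbt k hkC hbk) hc.2.1
          rw [if_pos hc, if_pos (show k ∈ Cset N t mm.val ∧ b k = false ∧ mh = g k from
            ⟨hkC, hb, hc.2.2.trans (hbf k hkC hb).2.2.symm⟩)]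
        · rw [if_neg hc]; exact Nat.zero_sub _
      rw [hstep1, Nat.zero_add, hNew_eq, if_pos hA]
      by_cases hm : mh.val = fire N mm.val t
      · rw [if_pos (show k ∈ Aset N t mm.val ∧ mh.val = fire N mm.val t from ⟨hA, hm⟩),
          if_pos (show enabled N mn.val k ∧ k ∉ Fnew N t mm.val F ∧ mh = mn from
            ⟨by rw [hmn]; exact hA.1, hnF, (hval mh).mpr hm⟩)]
      · rw [if_neg (show ¬ (k ∈ Aset N t mm.val ∧ mh.val = fire N mm.val t) from
            fun hx => hm hx.2),
          if_neg (show ¬ (enabled N mn.val k ∧ k ∉ Fnew N t mm.val F ∧ mh = mn) from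
            fun hx => hm ((hval mh).mp hx.2.2))]
    · -- k is not newly enabled
      rw [hNew_eq, if_neg hA,
        if_neg (show ¬ (k ∈ Aset N t mm.val ∧ mh.val = fire N mm.val t) from
          fun hx => hA hx.1), Nat.add_zero]
      by_cases hp : pers N mm.val t k
      · -- persistent : token untouched
        have hkC : k ∉ Cset N t mm.val := pers_not_Cset hp
        rw [if_neg (show ¬ (k ∈ Cset N t mm.val ∧ b k = false ∧ mh = g k) from
          fun hx => hkC hx.1), Nat.sub_zero]
        have hen : enabled N mn.val k := by rw [hmn]; exact pers_enab_after hp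
        by_cases hc : k ∉ F ∧ mh = h k
        · rw [if_pos (show enabled N mm.val k ∧ k ∉ F ∧ mh = h k from
              ⟨hp.2.1, hc.1, hc.2⟩),
            if_pos (show enabled N mn.val k ∧ k ∉ Fnew N t mm.val F ∧ mh = h k from
              ⟨hen, fun hx => hc.1 hx.1, hc.2⟩)]
        · rw [if_neg (show ¬ (enabled N mm.val k ∧ k ∉ F ∧ mh = h k) from
              fun hx => hc ⟨hx.2.1, hx.2.2⟩),
            if_neg (show ¬ (enabled N mn.val k ∧ k ∉ Fnew N t mm.val F ∧ mh = h k) from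
              fun hx => hc ⟨fun hkF => hx.2.1 ⟨hkF, hp.1, hkC⟩, hx.2.2⟩)]
      · -- k is disabled after the firing
        have hnew : ¬ enabled N (fire N mm.val t) k := fun he => hA ⟨he, hp⟩
        rw [if_neg (show ¬ (enabled N mn.val k ∧ k ∉ Fnew N t mm.val F ∧ mh = h k) from
          fun hx => hnew (by rw [← hmn]; exact hx.1))]
        by_cases hc : enabled N mm.val k ∧ k ∉ F ∧ mh = h k
        · have hkt : k ≠ t := fun he => hc.2.1 (he ▸ htF)
          have hkC : k ∈ Cset N t mm.val := ⟨hkt, hc.1, hp⟩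
          have hb : b k = false := by
            cases hbk : b k
            · rfl
            · exact absurd (hbt k hkC hbk) hc.2.1
          rw [if_pos hc, if_pos (show k ∈ Cset N t mm.val ∧ b k = false ∧ mh = g k from
            ⟨hkC, hb, hc.2.2.trans (hbf k hkC hb).2.2.symm⟩)]
        · rw [if_neg hc, Nat.zero_sub]
  · rw [fireB, preR_buf, postR_buf, Nat.add_zero, encM_buf, encM_buf]
    by_cases hkt : k = t
    · subst hkt
      rw [if_pos htF, if_pos (show k = k ∨ (k ∈ Cset N k mm.val ∧ b k = true) from Or.inl rfl),
        if_neg (show k ∉ Fnew N k mm.val F from fun hx => hx.2.1 rfl)]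
    · by_cases hkC : k ∈ Cset N t mm.val
      · rw [if_neg (show k ∉ Fnew N t mm.val F from fun hx => hx.2.2 hkC)]
        by_cases hkF : k ∈ F
        · have hb : b k = true := by
            cases hbk : b k
            · exact absurd hkF (hbf k hkC hbk).2.1
            · rfl
          rw [if_pos hkF,
            if_pos (show k = t ∨ (k ∈ Cset N t mm.val ∧ b k = true) from Or.inr ⟨hkC, hb⟩)]
        · rw [if_neg hkF,
            if_neg (show ¬ (k = t ∨ (k ∈ Cset N t mm.val ∧ b k = true)) from by
              rintro (rfl | ⟨_, hb⟩)
              · exact hkt rfl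
              · exact hkF (hbt k hkC hb))]
      · rw [if_neg (show ¬ (k = t ∨ (k ∈ Cset N t mm.val ∧ b k = true)) from by
            rintro (rfl | ⟨hC, _⟩)
            · exact hkt rfl
            · exact hkC hC), Nat.sub_zero]
        by_cases hkF : k ∈ F
        · rw [if_pos hkF, if_pos (mem_Fnew.mpr ⟨hkF, hkt, hkC⟩)]
        · rw [if_neg hkF, if_neg (show k ∉ Fnew N t mm.val F from fun hx => hkF hx.1)]

end WDTPN
namespace WDTPN

variable {P T : Type} {N : DTPN P T}

lemma persB_commit_of {mm : MM N} {h : T → MM N} {F : Set T} {t k : T} {mh : MM N}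
    (hk : enabled N mm.val k) (hkF : k ∉ F) (hmh : mh = h k) (hkt : k ≠ t) :
    pers (NB N) (encM N mm h F) (Sum.inl (t, h t)) (Sum.inl (k, mh)) := by
  refine ⟨?_, en_commit.mpr ⟨hk, hkF, hmh⟩, ?_⟩
  · intro he
    exact hkt (congrArg Prod.fst (Sum.inl.inj he))
  · intro pl
    rcases pl with m' | ⟨k', mh'⟩ | kk
    · rw [preC_mark]; exact Nat.zero_le _
    · rw [preC_track]
      by_cases hx : k' = k ∧ mh' = mh
      · obtain ⟨rfl, rfl⟩ := hx
        rw [if_pos (show k' = k' ∧ mh' = mh' from ⟨rfl, rfl⟩), preC_track,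
          if_neg (show ¬ (k' = t ∧ mh' = h t) from fun hx => hkt hx.1),
          encM_track,
          if_pos (show enabled N mm.val k' ∧ k' ∉ F ∧ mh' = h k' from ⟨hk, hkF, hmh⟩),
          Nat.sub_zero]
      · rw [if_neg hx]; exact Nat.zero_le _
    · rw [preC_buf]; exact Nat.zero_le _

lemma persB_reorg_of {mm : MM N} {h : T → MM N} {F : Set T} {t k : T} {mh : MM N}
    {g : T → MM N} {b : T → Bool}
    (hk : enabled N mm.val k) (hkF : k ∉ F) (hmh : mh = h k)
    (hkC : k ∉ Cset N t mm.val) :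
    pers (NB N) (encM N mm h F) (Sum.inr (t, mm, g, b)) (Sum.inl (k, mh)) := by
  refine ⟨fun he => Sum.inl_ne_inr he, en_commit.mpr ⟨hk, hkF, hmh⟩, ?_⟩
  intro pl
  rcases pl with m' | ⟨k', mh'⟩ | kk
  · rw [preC_mark]; exact Nat.zero_le _
  · rw [preC_track]
    by_cases hx : k' = k ∧ mh' = mh
    · obtain ⟨rfl, rfl⟩ := hx
      rw [if_pos (show k' = k' ∧ mh' = mh' from ⟨rfl, rfl⟩), preR_track,
        if_neg (show ¬ (k' ∈ Cset N t mm.val ∧ b k' = false ∧ mh' = g k') from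
          fun hx => hkC hx.1),
        encM_track,
        if_pos (show enabled N mm.val k' ∧ k' ∉ F ∧ mh' = h k' from ⟨hk, hkF, hmh⟩),
        Nat.sub_zero]
    · rw [if_neg hx]; exact Nat.zero_le _
  · rw [preC_buf]; exact Nat.zero_le _

lemma not_persB_reorg {mm : MM N} {h : T → MM N} {F : Set T} {t k : T} {mh : MM N}
    {g : T → MM N} {b : T → Bool}
    (hbf : ∀ k, k ∈ Cset N t mm.val → b k = false →
      (enabled N mm.val k ∧ k ∉ F ∧ g k = h k))
    (hbt : ∀ k, k ∈ Cset N t mm.val → b k = true → k ∈ F)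
    (hkC : k ∈ Cset N t mm.val) (hkF : k ∉ F) (hmh : mh = h k) :
    ¬ pers (NB N) (encM N mm h F) (Sum.inr (t, mm, g, b)) (Sum.inl (k, mh)) := by
  intro hp
  have hb : b k = false := by
    cases hbk : b k
    · rfl
    · exact absurd (hbt k hkC hbk) hkF
  have h1 := hp.2.2 (Sum.inr (Sum.inl (k, mh)))
  rw [preC_track, if_pos (show k = k ∧ mh = mh from ⟨rfl, rfl⟩), preR_track,
    if_pos (show k ∈ Cset N t mm.val ∧ b k = false ∧ mh = g k from
      ⟨hkC, hb, hmh.trans (hbf k hkC hb).2.2.symm⟩), encM_track] at h1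
  split at h1 <;> omega

/-- in any discrete B-step from an encoded state, reorg copies end with clock 0. -/
lemma reorg_clock_zero {mm : MM N} {h : T → MM N} {F : Set T} {τ : T → ℝ}
    {tr : Tr N} {s₂' : NState (Pl N) (Tr N)}
    (hd : discStep (NB N) (encM N mm h F, encC N mm h F τ) tr s₂')
    (x : T × MM N × (T → MM N) × (T → Bool)) :
    s₂'.2 (Sum.inr x) = 0 := by
  by_cases hpb : pers (NB N) (encM N mm h F) tr (Sum.inr x)
  · have h4 := hd.2.2.2.1 (Sum.inr x) hpb
    rw [NB_Idyn] at h4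
    have := mem_ptIv.mp h4
    simpa [encC_reorg] using this
  · by_cases hen : enabled (NB N) s₂'.1 (Sum.inr x)
    · have h5 := hd.2.2.2.2.1 (Sum.inr x) hen hpb
      rw [NB_Is, IsB_reorg] at h5
      have := mem_ptIv.mp h5
      simpa using this
    · exact hd.2.2.2.2.2 (Sum.inr x) hen

/-- B performs a commit step. -/
lemma stepB_commit {mm : MM N} {h : T → MM N} {F : Set T} {τ : T → ℝ} {t : T}
    (hnn : ∀ k, enabled N mm.val k → 0 ≤ τ k)
    (htE : enabled N mm.val t) (htF : t ∉ F) (hτt : τ t = 0) :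
    discStep (NB N) (encM N mm h F, encC N mm h F τ) (Sum.inl (t, h t))
      (encM N mm h (F ∪ {t}), encC N mm h (F ∪ {t}) τ) := by
  refine ⟨en_commit.mpr ⟨htE, htF, rfl⟩, ?_, (fire_commit htF).symm, ?_, ?_, ?_⟩
  · show encC N mm h F τ (Sum.inl (t, h t)) = 0
    rw [encC_commit, if_pos ⟨htE, htF, rfl⟩]
    exact hτt
  · -- persistent copies keep their clocks
    rintro (⟨k, mh⟩ | x) hp
    · obtain ⟨hk, hkF, hmh⟩ := en_commit.mp hp.2.1
      have hkt : k ≠ t := by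
        rintro rfl
        exact hp.1 (by rw [hmh])
      show (ptIv (encC N mm h F τ (Sum.inl (k, mh)))).mem
        (encC N mm h (F ∪ {t}) τ (Sum.inl (k, mh)))
      rw [encC_commit, encC_commit, if_pos ⟨hk, hkF, hmh⟩,
        if_pos ⟨hk, fun hx => Or.elim hx hkF hkt, hmh⟩]
      exact (mem_ptIv' (hnn k hk)).mpr rfl
    · show (ptIv (encC N mm h F τ (Sum.inr x))).mem
        (encC N mm h (F ∪ {t}) τ (Sum.inr x))
      rw [encC_reorg, encC_reorg]
      exact (mem_ptIv' le_rfl).mpr rfl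
  · -- newly enabled copies
    rintro (⟨k, mh⟩ | x) hen hnp
    · exfalso
      obtain ⟨hk, hkF', hmh⟩ := en_commit.mp hen
      exact hnp (persB_commit_of hk (fun hf => hkF' (Or.inl hf)) hmh
        (fun he => hkF' (Or.inr he)))
    · show (IsB N (Sum.inr x)).mem (encC N mm h (F ∪ {t}) τ (Sum.inr x))
      rw [IsB_reorg, encC_reorg]
      exact (mem_ptIv' le_rfl).mpr rfl
  · -- disabled copies
    rintro (⟨k, mh⟩ | x) hen
    · show encC N mm h (F ∪ {t}) τ (Sum.inl (k, mh)) = 0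
      rw [encC_commit, if_neg (fun hc => hen (en_commit.mpr hc))]
    · show encC N mm h (F ∪ {t}) τ (Sum.inr x) = 0
      rw [encC_reorg]

/-- B performs a reorg step, matching an A-step that fires `t` with new clocks `τ'`. -/
lemma stepB_reorg {mm : MM N} {h : T → MM N} {F : Set T} {τ τ' : T → ℝ} {t : T}
    (hnn : ∀ k, enabled N mm.val k → 0 ≤ τ k)
    (htF : t ∈ F) (hpend : ∀ k ∈ F, enabled N mm.val k ∧ τ k = 0)
    (mn : MM N) (hmn : mn.val = fire N mm.val t)
    (hpers' : ∀ k, pers N mm.val t k → τ' k = τ k)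
    (hnew' : ∀ k, enabled N (fire N mm.val t) k → ¬ pers N mm.val t k →
      (N.Is k (fire N mm.val t)).mem (τ' k)) :
    discStep (NB N) (encM N mm h F, encC N mm h F τ)
      (Sum.inr (t, mm, h, fun k => if k ∈ F then true else false))
      (encM N mn (hNew N t mm.val mn h) (Fnew N t mm.val F),
       encC N mn (hNew N t mm.val mn h) (Fnew N t mm.val F) τ') := by
  have hpendE : ∀ k ∈ F, enabled N mm.val k := fun k hk => (hpend k hk).1
  have hbf : ∀ k, k ∈ Cset N t mm.val → (if k ∈ F then true else false) = false →
      (enabled N mm.val k ∧ k ∉ F ∧ h k = h k) := by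
    intro k hkC hb
    have hkF : k ∉ F := by
      intro hkF; rw [if_pos hkF] at hb; simp at hb
    exact ⟨hkC.2.1, hkF, rfl⟩
  have hbt : ∀ k, k ∈ Cset N t mm.val → (if k ∈ F then true else false) = true →
      k ∈ F := by
    intro k _ hb
    by_contra hkF; rw [if_neg hkF] at hb; simp at hb
  refine ⟨en_reorg_true htF hpendE, ?_, (fire_reorg htF hpendE hbf hbt mn hmn).symm,
    ?_, ?_, ?_⟩
  · show encC N mm h F τ (Sum.inr (t, mm, h, fun k => if k ∈ F then true else false)) = 0
    rw [encC_reorg]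
  · -- persistent copies
    rintro (⟨k, mh⟩ | x) hp
    · obtain ⟨hk, hkF, hmh⟩ := en_commit.mp hp.2.1
      have hkC : k ∉ Cset N t mm.val := by
        intro hkC
        exact not_persB_reorg hbf hbt hkC hkF hmh hp
      have hkt : k ≠ t := fun he => hkF (he ▸ htF)
      have hpN : pers N mm.val t k := pers_of_not_Cset hk hkt hkC
      show (ptIv (encC N mm h F τ (Sum.inl (k, mh)))).mem
        (encC N mn (hNew N t mm.val mn h) (Fnew N t mm.val F) τ' (Sum.inl (k, mh)))
      rw [encC_commit, encC_commit, if_pos ⟨hk, hkF, hmh⟩,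
        if_pos (show enabled N mn.val k ∧ k ∉ Fnew N t mm.val F ∧
            mh = hNew N t mm.val mn h k from
          ⟨by rw [hmn]; exact pers_enab_after hpN, fun hx => hkF hx.1,
           by rw [hNew_eq, if_neg (pers_not_Aset hpN)]; exact hmh⟩),
        hpers' k hpN]
      exact (mem_ptIv' (hnn k hk)).mpr rfl
    · show (ptIv (encC N mm h F τ (Sum.inr x))).mem
        (encC N mn (hNew N t mm.val mn h) (Fnew N t mm.val F) τ' (Sum.inr x))
      rw [encC_reorg, encC_reorg]
      exact (mem_ptIv' le_rfl).mpr rfl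
  · -- newly enabled copies
    rintro (⟨k, mh⟩ | x) hen hnp
    · obtain ⟨hk', hkF', hmh'⟩ := en_commit.mp hen
      have hkE : enabled N (fire N mm.val t) k := by rw [← hmn]; exact hk'
      by_cases hA : k ∈ Aset N t mm.val
      · have hmh2 : mh = mn := by
          rw [hmh', hNew_eq, if_pos hA]
        show (IsB N (Sum.inl (k, mh))).mem
          (encC N mn (hNew N t mm.val mn h) (Fnew N t mm.val F) τ' (Sum.inl (k, mh)))
        rw [IsB_commit, encC_commit, if_pos ⟨hk', hkF', hmh'⟩, hmh2, hmn]
        exact hnew' k hA.1 hA.2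
      · exfalso
        have hpN : pers N mm.val t k := by
          by_contra hnpN
          exact hA ⟨hkE, hnpN⟩
        have hkF : k ∉ F := by
          intro hkF
          exact hkF' ⟨hkF, hpN.1, pers_not_Cset hpN⟩
        have hmh3 : mh = h k := by
          rw [hmh', hNew_eq, if_neg hA]
        exact hnp (persB_reorg_of hpN.2.1 hkF hmh3 (pers_not_Cset hpN))
    · show (IsB N (Sum.inr x)).mem
        (encC N mn (hNew N t mm.val mn h) (Fnew N t mm.val F) τ' (Sum.inr x))
      rw [IsB_reorg, encC_reorg]
      exact (mem_ptIv' le_rfl).mpr rfl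
  · -- disabled copies
    rintro (⟨k, mh⟩ | x) hen
    · show encC N mn (hNew N t mm.val mn h) (Fnew N t mm.val F) τ' (Sum.inl (k, mh)) = 0
      rw [encC_commit, if_neg (fun hc => hen (en_commit.mpr hc))]
    · show encC N mn (hNew N t mm.val mn h) (Fnew N t mm.val F) τ' (Sum.inr x) = 0
      rw [encC_reorg]

end WDTPN
namespace WDTPN

variable {P T : Type} {N : DTPN P T}

/-- analysis of an arbitrary commit step of B from an encoded state. -/
lemma inv_commit {mm : MM N} {h : T → MM N} {F : Set T} {τ : T → ℝ} {t : T}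
    {mh : MM N} {s₂' : NState (Pl N) (Tr N)}
    (hnn : ∀ k, enabled N mm.val k → 0 ≤ τ k)
    (hd : discStep (NB N) (encM N mm h F, encC N mm h F τ) (Sum.inl (t, mh)) s₂') :
    enabled N mm.val t ∧ t ∉ F ∧ τ t = 0 ∧
      s₂' = (encM N mm h (F ∪ {t}), encC N mm h (F ∪ {t}) τ) := by
  obtain ⟨htE, htF, hmh⟩ := en_commit.mp hd.1
  subst hmh
  have hτt : τ t = 0 := by
    have h2 := hd.2.1
    rw [show (encM N mm h F, encC N mm h F τ).2 (Sum.inl (t, h t)) =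
      encC N mm h F τ (Sum.inl (t, h t)) from rfl, encC_commit,
      if_pos ⟨htE, htF, rfl⟩] at h2
    exact h2
  have h31 : s₂'.1 = encM N mm h (F ∪ {t}) :=
    hd.2.2.1.trans (fire_commit htF)
  refine ⟨htE, htF, hτt, Prod.ext h31 ?_⟩
  funext tr'
  rcases tr' with ⟨k, mh'⟩ | x
  · by_cases hc : enabled N mm.val k ∧ k ∉ F ∪ {t} ∧ mh' = h k
    · have hpb := persB_commit_of hc.1 (fun hf => hc.2.1 (Or.inl hf)) hc.2.2
        (fun he => hc.2.1 (Or.inr he))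
      have h4 := hd.2.2.2.1 (Sum.inl (k, mh')) hpb
      rw [NB_Idyn] at h4
      have h4' := mem_ptIv.mp h4
      rw [h4']
      show max (encC N mm h F τ (Sum.inl (k, mh'))) 0 =
        encC N mm h (F ∪ {t}) τ (Sum.inl (k, mh'))
      rw [encC_commit, encC_commit, if_pos ⟨hc.1, fun hf => hc.2.1 (Or.inl hf), hc.2.2⟩,
        if_pos hc]
      exact max_eq_left (hnn k hc.1)
    · have hz := hd.2.2.2.2.2 (Sum.inl (k, mh'))
        (by rw [h31]; exact fun he => hc (en_commit.mp he))
      rw [hz]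
      show (0 : ℝ) = encC N mm h (F ∪ {t}) τ (Sum.inl (k, mh'))
      rw [encC_commit, if_neg hc]
  · rw [reorg_clock_zero hd x]
    show (0 : ℝ) = encC N mm h (F ∪ {t}) τ (Sum.inr x)
    rw [encC_reorg]

/-- analysis of an arbitrary reorg step of B from an encoded state. -/
lemma inv_reorg (hweak : TrivialIdyn N) {mm : MM N} {h : T → MM N} {F : Set T}
    {τ : T → ℝ} {t : T} {mc : MM N} {g : T → MM N} {b : T → Bool}
    {s₂' : NState (Pl N) (Tr N)}
    (hnn : ∀ k, enabled N mm.val k → 0 ≤ τ k)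
    (hpend : ∀ k ∈ F, enabled N mm.val k ∧ τ k = 0)
    (mn : MM N) (hmn : mn.val = fire N mm.val t)
    (hd : discStep (NB N) (encM N mm h F, encC N mm h F τ) (Sum.inr (t, mc, g, b)) s₂') :
    t ∈ F ∧
    discStep N (mm.val, τ) t (fire N mm.val t,
      fun k => if enabled N (fire N mm.val t) k
        then s₂'.2 (Sum.inl (k, hNew N t mm.val mn h k)) else 0) ∧
    s₂' = (encM N mn (hNew N t mm.val mn h) (Fnew N t mm.val F),
      encC N mn (hNew N t mm.val mn h) (Fnew N t mm.val F)
        (fun k => if enabled N (fire N mm.val t) k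
          then s₂'.2 (Sum.inl (k, hNew N t mm.val mn h k)) else 0)) := by
  obtain ⟨hmc, htF, hbb⟩ := en_reorg_elim hd.1
  rw [hmc] at hd
  have hpendE : ∀ k ∈ F, enabled N mm.val k := fun k hk => (hpend k hk).1
  have hbf : ∀ k, k ∈ Cset N t mm.val → b k = false →
      (enabled N mm.val k ∧ k ∉ F ∧ g k = h k) := fun k hk => (hbb k hk).1
  have hbt : ∀ k, k ∈ Cset N t mm.val → b k = true → k ∈ F := fun k hk => (hbb k hk).2
  have htE : enabled N mm.val t := (hpend t htF).1
  have hτt : τ t = 0 := (hpend t htF).2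
  have h31 : s₂'.1 = encM N mn (hNew N t mm.val mn h) (Fnew N t mm.val F) :=
    hd.2.2.1.trans (fire_reorg htF hpendE hbf hbt mn hmn)
  have V3 : ∀ k (mh' : MM N),
      ¬ (enabled N mn.val k ∧ k ∉ Fnew N t mm.val F ∧ mh' = hNew N t mm.val mn h k) →
      s₂'.2 (Sum.inl (k, mh')) = 0 := by
    intro k mh' hc
    refine hd.2.2.2.2.2 (Sum.inl (k, mh')) ?_
    rw [h31]
    exact fun he => hc (en_commit.mp he)
  have V1 : ∀ k, pers N mm.val t k → k ∉ F → s₂'.2 (Sum.inl (k, h k)) = τ k := by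
    intro k hpN hkF
    have hpb := persB_reorg_of (h := h) (t := t) (g := g) (b := b) hpN.2.1 hkF rfl
      (pers_not_Cset hpN)
    have h4 := hd.2.2.2.1 (Sum.inl (k, h k)) hpb
    rw [NB_Idyn] at h4
    have h4' := mem_ptIv.mp h4
    rw [h4']
    show max (encC N mm h F τ (Sum.inl (k, h k))) 0 = τ k
    rw [encC_commit, if_pos ⟨hpN.2.1, hkF, rfl⟩]
    exact max_eq_left (hnn k hpN.2.1)
  have V2 : ∀ k, k ∈ Aset N t mm.val →
      (N.Is k mn.val).mem (s₂'.2 (Sum.inl (k, mn))) := by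
    intro k hA
    have hkFn : k ∉ Fnew N t mm.val F := by
      rintro ⟨hkF, hkt, hkC⟩
      exact hA.2 (pers_of_not_Cset (hpendE k hkF) hkt hkC)
    have hen : enabled (NB N) s₂'.1 (Sum.inl (k, mn)) := by
      rw [h31]
      exact en_commit.mpr ⟨by rw [hmn]; exact hA.1, hkFn, by rw [hNew_eq, if_pos hA]⟩
    have hnp : ¬ pers (NB N) (encM N mm h F) (Sum.inr (t, mm, g, b))
        (Sum.inl (k, mn)) := by
      intro hpb
      obtain ⟨hk', hkF', hmh'⟩ := en_commit.mp hpb.2.1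
      have hkt : k ≠ t := fun he => hkF' (he ▸ htF)
      exact not_persB_reorg hbf hbt ⟨hkt, hk', hA.2⟩ hkF' hmh' hpb
    have h5 := hd.2.2.2.2.1 (Sum.inl (k, mn)) hen hnp
    rw [NB_Is, IsB_commit] at h5
    exact h5
  refine ⟨htF, ⟨htE, hτt, rfl, ?_, ?_, ?_⟩, Prod.ext h31 ?_⟩
  · -- persistent transitions of A keep their clocks
    intro k hpN
    refine (hweak k (fire N mm.val t) (τ k) _ (hnn k hpN.2.1)).mpr ?_
    show (if enabled N (fire N mm.val t) k
        then s₂'.2 (Sum.inl (k, hNew N t mm.val mn h k)) else 0) = τ k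
    rw [if_pos (pers_enab_after hpN), hNew_eq, if_neg (pers_not_Aset hpN)]
    by_cases hkF : k ∈ F
    · rw [(hpend k hkF).2]
      exact V3 k (h k) (fun hc =>
        hc.2.1 ⟨hkF, hpN.1, pers_not_Cset hpN⟩)
    · exact V1 k hpN hkF
  · -- newly enabled transitions of A
    intro k hk hnp
    show (N.Is k (fire N mm.val t)).mem
      (if enabled N (fire N mm.val t) k
        then s₂'.2 (Sum.inl (k, hNew N t mm.val mn h k)) else 0)
    rw [if_pos hk, hNew_eq, if_pos (show k ∈ Aset N t mm.val from ⟨hk, hnp⟩)]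
    have := V2 k ⟨hk, hnp⟩
    rw [hmn] at this
    exact this
  · -- disabled transitions of A
    intro k hk
    show (if enabled N (fire N mm.val t) k
        then s₂'.2 (Sum.inl (k, hNew N t mm.val mn h k)) else 0) = 0
    rw [if_neg hk]
  · -- the new clock function of B
    funext tr'
    rcases tr' with ⟨k, mh'⟩ | x
    · by_cases hc : enabled N mn.val k ∧ k ∉ Fnew N t mm.val F ∧
          mh' = hNew N t mm.val mn h k
      · show s₂'.2 (Sum.inl (k, mh')) =
          if enabled N mn.val k ∧ k ∉ Fnew N t mm.val F ∧
              mh' = hNew N t mm.val mn h k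
          then (if enabled N (fire N mm.val t) k
                then s₂'.2 (Sum.inl (k, hNew N t mm.val mn h k)) else 0)
          else 0
        rw [if_pos hc,
          if_pos (show enabled N (fire N mm.val t) k from by rw [← hmn]; exact hc.1),
          hc.2.2]
      · have hz := V3 k mh' hc
        rw [hz]
        show (0 : ℝ) =
          if enabled N mn.val k ∧ k ∉ Fnew N t mm.val F ∧
              mh' = hNew N t mm.val mn h k
          then (if enabled N (fire N mm.val t) k
                then s₂'.2 (Sum.inl (k, hNew N t mm.val mn h k)) else 0)
          else 0
        rw [if_neg hc]
    · rw [reorg_clock_zero hd x]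
      rfl

end WDTPN
namespace WDTPN

variable {P T : Type} {N : DTPN P T}

lemma encC_nonneg {mm : MM N} {h : T → MM N} {F : Set T} {τ : T → ℝ}
    (hnn : ∀ k, enabled N mm.val k → 0 ≤ τ k) :
    ∀ tr, enabled (NB N) (encM N mm h F) tr → 0 ≤ encC N mm h F τ tr := by
  rintro (⟨k, mh⟩ | x) htr
  · obtain ⟨hk, hkF, hmh⟩ := en_commit.mp htr
    rw [encC_commit, if_pos ⟨hk, hkF, hmh⟩]; exact hnn k hk
  · rw [encC_reorg]

lemma no_reorg_enabled {mm : MM N} {h : T → MM N}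
    (x : T × MM N × (T → MM N) × (T → Bool)) :
    ¬ enabled (NB N) (encM N mm h (∅ : Set T)) (Sum.inr x) := by
  obtain ⟨t, mc, g, b⟩ := x
  intro he
  exact (en_reorg_elim he).2.1

lemma delay_eqB0 {mm : MM N} {h : T → MM N} {F : Set T} {τ : T → ℝ} :
    (fun tr => if enabled (NB N) (encM N mm h F) tr
      then encC N mm h F τ tr - 0 else 0) = encC N mm h F τ := by
  funext tr
  rcases tr with ⟨k, mh⟩ | x
  · by_cases hc : enabled N mm.val k ∧ k ∉ F ∧ mh = h k
    · rw [if_pos (en_commit.mpr hc), sub_zero]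
    · rw [if_neg (fun he => hc (en_commit.mp he)), encC_commit, if_neg hc]
  · by_cases he : enabled (NB N) (encM N mm h F) (Sum.inr x)
    · rw [if_pos he, encC_reorg, sub_zero]
    · rw [if_neg he, encC_reorg]

lemma delay_eqB {mm : MM N} {h : T → MM N} {τ : T → ℝ} {θ : ℝ} :
    (fun tr => if enabled (NB N) (encM N mm h (∅ : Set T)) tr
      then encC N mm h ∅ τ tr - θ else 0) =
    encC N mm h ∅ (fun k => if enabled N mm.val k then τ k - θ else 0) := by
  funext tr
  rcases tr with ⟨k, mh⟩ | x
  · by_cases hc : enabled N mm.val k ∧ k ∉ (∅ : Set T) ∧ mh = h k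
    · rw [if_pos (en_commit.mpr hc), encC_commit, if_pos hc, encC_commit, if_pos hc]
      show τ k - θ = if enabled N mm.val k then τ k - θ else 0
      rw [if_pos hc.1]
    · rw [if_neg (fun he => hc (en_commit.mp he)), encC_commit, if_neg hc]
  · rw [if_neg (no_reorg_enabled x), encC_reorg]

lemma delay_eqA0 {m : P → ℕ} {τ : T → ℝ}
    (hz : ∀ k, ¬ enabled N m k → τ k = 0) :
    (fun k => if enabled N m k then τ k - 0 else 0) = τ := by
  funext k
  by_cases hk : enabled N m k
  · rw [if_pos hk, sub_zero]
  · rw [if_neg hk, (hz k hk)]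

/-- invariants are preserved along discrete A-steps. -/
lemma inv_preserve (hweak : TrivialIdyn N) {s s' : NState P T} {t : T}
    (hnn : ∀ k, enabled N s.1 k → 0 ≤ s.2 k)
    (hd : discStep N s t s') :
    (∀ k, enabled N s'.1 k → 0 ≤ s'.2 k) ∧ (∀ k, ¬ enabled N s'.1 k → s'.2 k = 0) := by
  constructor
  · intro k hk
    by_cases hp : pers N s.1 t k
    · have h4 := hd.2.2.2.1 k hp
      rw [hweak k s'.1 (s.2 k) (s'.2 k) (hnn k hp.2.1)] at h4
      rw [h4]
      exact hnn k hp.2.1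
    · exact mem_nonneg (hd.2.2.2.2.1 k hk hp)
  · exact hd.2.2.2.2.2

/-- pers-clocks are kept along discrete A-steps. -/
lemma pers_clock (hweak : TrivialIdyn N) {s s' : NState P T} {t : T}
    (hnn : ∀ k, enabled N s.1 k → 0 ≤ s.2 k)
    (hd : discStep N s t s') {k : T} (hp : pers N s.1 t k) : s'.2 k = s.2 k := by
  have h4 := hd.2.2.2.1 k hp
  rw [hweak k s'.1 (s.2 k) (s'.2 k) (hnn k hp.2.1)] at h4
  exact h4

/-- the initial marking of `NB` is an encoded marking. -/
lemma encM_m0 (N : DTPN P T) :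
    encM N ⟨N.m0, m0_mem N⟩ (fun _ => ⟨N.m0, m0_mem N⟩) (∅ : Set T) = (NB N).m0 := by
  funext pl
  rcases pl with m' | ⟨k, mh⟩ | k
  · rw [encM_mark, m0B_mark]
    by_cases hc : m'.val = N.m0
    · rw [if_pos hc, if_pos (Subtype.ext hc)]
    · rw [if_neg hc, if_neg (fun he => hc (congrArg Subtype.val he))]
  · rw [encM_track, m0B_track]
    by_cases hc : enabled N N.m0 k ∧ mh.val = N.m0
    · rw [if_pos hc, if_pos ⟨hc.1, fun hf => hf, Subtype.ext hc.2⟩]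
    · rw [if_neg hc, if_neg (fun hx =>
        hc ⟨hx.1, congrArg Subtype.val hx.2.2⟩)]
  · rw [encM_buf, m0B_buf, if_neg (fun hf : k ∈ (∅ : Set T) => hf)]

end WDTPN
namespace WDTPN

variable {P T : Type} {N : DTPN P T}

def mm0 (N : DTPN P T) : MM N := ⟨N.m0, m0_mem N⟩

lemma encM_m0' (N : DTPN P T) :
    encM N (mm0 N) (fun _ => mm0 N) ∅ = (NB N).m0 := encM_m0 N

lemma initB_of_initA {τ : T → ℝ} (hinit : initState N (N.m0, τ)) :
    initState (NB N) (encM N (mm0 N) (fun _ => mm0 N) ∅,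
      encC N (mm0 N) (fun _ => mm0 N) ∅ τ) := by
  refine ⟨encM_m0' N, ?_, ?_⟩
  · rintro (⟨k, mh⟩ | x) htr
    · rw [show (NB N).m0 = encM N (mm0 N) (fun _ => mm0 N) ∅ from (encM_m0' N).symm] at htr
      obtain ⟨hk, _, hmh⟩ := en_commit.mp htr
      show (IsB N (Sum.inl (k, mh))).mem
        (encC N (mm0 N) (fun _ => mm0 N) ∅ τ (Sum.inl (k, mh)))
      rw [IsB_commit, encC_commit, if_pos ⟨hk, fun hf => hf, hmh⟩]
      have h5 := hinit.2.1 k hk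
      rw [hmh]
      exact h5
    · rw [show (NB N).m0 = encM N (mm0 N) (fun _ => mm0 N) ∅ from (encM_m0' N).symm] at htr
      exact absurd htr (no_reorg_enabled x)
  · rintro (⟨k, mh⟩ | x) htr
    · rw [show (NB N).m0 = encM N (mm0 N) (fun _ => mm0 N) ∅ from (encM_m0' N).symm] at htr
      show encC N (mm0 N) (fun _ => mm0 N) ∅ τ (Sum.inl (k, mh)) = 0
      rw [encC_commit, if_neg (fun hc => htr (en_commit.mpr hc))]
    · show encC N (mm0 N) (fun _ => mm0 N) ∅ τ (Sum.inr x) = 0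
      rw [encC_reorg]

lemma relInit_A {τ : T → ℝ} (hinit : initState N (N.m0, τ)) :
    Rel N (N.m0, τ) (encM N (mm0 N) (fun _ => mm0 N) ∅,
      encC N (mm0 N) (fun _ => mm0 N) ∅ τ) :=
  ⟨mm0 N, fun _ => mm0 N, ∅, rfl,
    ⟨(N.m0, τ), hinit, Relation.ReflTransGen.refl⟩,
    fun k hk => le_trans (N.Is k N.m0).lo_nonneg (hinit.2.1 k hk).1,
    hinit.2.2, fun k hk => absurd hk (Set.notMem_empty k), rfl, rfl⟩

lemma initA_of_initB {s₂ : NState (Pl N) (Tr N)} (hinit : initState (NB N) s₂) :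
    ∃ s₁, initState N s₁ ∧ Rel N s₁ s₂ := by
  set τ : T → ℝ :=
    fun k => if enabled N N.m0 k then s₂.2 (Sum.inl (k, mm0 N)) else 0 with hτ
  have hA : initState N (N.m0, τ) := by
    refine ⟨rfl, ?_, ?_⟩
    · intro t ht
      show (N.Is t N.m0).mem (if enabled N N.m0 t then s₂.2 (Sum.inl (t, mm0 N)) else 0)
      rw [if_pos ht]
      have hen : enabled (NB N) (NB N).m0 (Sum.inl (t, mm0 N)) := by
        rw [show (NB N).m0 = encM N (mm0 N) (fun _ => mm0 N) ∅ from (encM_m0' N).symm]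
        exact en_commit.mpr ⟨ht, fun hf => hf, rfl⟩
      have h5 := hinit.2.1 _ hen
      rw [NB_Is, IsB_commit] at h5
      exact h5
    · intro t ht
      show (if enabled N N.m0 t then s₂.2 (Sum.inl (t, mm0 N)) else 0) = 0
      rw [if_neg ht]
  refine ⟨(N.m0, τ), hA, mm0 N, fun _ => mm0 N, ∅, rfl,
    ⟨(N.m0, τ), hA, Relation.ReflTransGen.refl⟩, ?_, ?_, ?_, ?_, ?_⟩
  · exact fun k hk => le_trans (N.Is k N.m0).lo_nonneg ((hA.2.1 k hk).1)
  · exact hA.2.2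
  · exact fun k hk => absurd hk (Set.notMem_empty k)
  · exact hinit.1.trans (encM_m0' N).symm
  · funext tr
    rcases tr with ⟨k, mh⟩ | x
    · by_cases hc : enabled N (mm0 N).val k ∧ k ∉ (∅ : Set T) ∧ mh = mm0 N
      · show s₂.2 (Sum.inl (k, mh)) =
          encC N (mm0 N) (fun _ => mm0 N) ∅ τ (Sum.inl (k, mh))
        rw [encC_commit, if_pos (show enabled N (mm0 N).val k ∧ k ∉ (∅ : Set T) ∧
            mh = (fun _ => mm0 N) k from hc), hτ]
        show s₂.2 (Sum.inl (k, mh)) =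
          if enabled N N.m0 k then s₂.2 (Sum.inl (k, mm0 N)) else 0
        rw [if_pos (show enabled N N.m0 k from hc.1), hc.2.2]
      · have hzz : s₂.2 (Sum.inl (k, mh)) = 0 := by
          refine hinit.2.2 _ ?_
          rw [show (NB N).m0 = encM N (mm0 N) (fun _ => mm0 N) ∅ from (encM_m0' N).symm]
          exact fun he => hc (en_commit.mp he)
        rw [hzz]
        show (0 : ℝ) = encC N (mm0 N) (fun _ => mm0 N) ∅ τ (Sum.inl (k, mh))
        rw [encC_commit, if_neg hc]
    · have hzz : s₂.2 (Sum.inr x) = 0 := by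
        refine hinit.2.2 _ ?_
        rw [show (NB N).m0 = encM N (mm0 N) (fun _ => mm0 N) ∅ from (encM_m0' N).symm]
        exact no_reorg_enabled x
      rw [hzz]; rfl

end WDTPN

open WDTPN

/-- **Theorem 1 of the paper.** For every weak DTPN `N` (trivial dynamic
interval function) with a finite set of reachable markings, there is a Time
Petri Net `N'` over finite sets of places and transitions, with a labelling of
its transitions by `T ∪ {τ̂}`, whose labelled state graph is weakly timed
bisimilar to the state graph of `N`. -/
theorem weak_DTPN_equiv_TPN {P T : Type} [Fintype P] [Fintype T]
    (N : DTPN P T) (hweak : TrivialIdyn N) (hfin : FiniteMarkings N) :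
    ∃ (P' T' : Type) (_ : Fintype P') (_ : Fintype T') (N' : DTPN P' T')
      (ℓ : T' → Option T),
      IsTPN N' ∧ Bisimilar (SG N) (labelledSG N' ℓ) := by
  classical
  haveI : DecidableEq T := Classical.typeDecidableEq T
  haveI : Fintype (MM N) := Set.Finite.fintype hfin
  refine ⟨Pl N, Tr N, inferInstance, inferInstance, NB N, lab N, NB_isTPN N, ?_⟩
  refine ⟨Rel N, ?_, ?_, ?_, ?_⟩
  · -- B simulates A
    intro s₁ α s₁' hstep s₂ hrel
    obtain ⟨mm, h, F, hval, hre, hnn, hz, hpend, h2m, h2c⟩ := hrel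
    have hs₂ : s₂ = (encM N mm h F, encC N mm h F s₁.2) := Prod.ext h2m h2c
    subst hs₂
    obtain ⟨m, τ⟩ := s₁
    replace hval : m = mm.val := hval
    subst hval
    replace hnn : ∀ k, enabled N mm.val k → 0 ≤ τ k := hnn
    replace hz : ∀ k, ¬ enabled N mm.val k → τ k = 0 := hz
    replace hpend : ∀ t ∈ F, enabled N mm.val t ∧ τ t = 0 := hpend
    cases α with
    | silent => exact hstep.elim
    | disc t =>
      replace hstep : discStep N (mm.val, τ) t s₁' := hstep
      obtain ⟨m', τ'⟩ := s₁'
      replace hstep : discStep N (mm.val, τ) t (m', τ') := hstep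
      have hm' : m' = fire N mm.val t := hstep.2.2.1
      subst hm'
      have hre' : (SG N).Reach (fire N mm.val t, τ') :=
        reach_tail hre (l := TLabel.disc t) hstep
      have hmem : fire N mm.val t ∈ Msk N := ⟨τ', hre'⟩
      have htE : enabled N mm.val t := hstep.1
      have hτt : τ t = 0 := hstep.2.1
      have hpers' : ∀ k, pers N mm.val t k → τ' k = τ k :=
        fun k hp => pers_clock hweak hnn hstep hp
      have hnew' : ∀ k, enabled N (fire N mm.val t) k → ¬ pers N mm.val t k →
          (N.Is k (fire N mm.val t)).mem (τ' k) :=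
        fun k hk hnp => hstep.2.2.2.2.1 k hk hnp
      have hinv := inv_preserve hweak hnn hstep
      by_cases htF : t ∈ F
      · refine ⟨(encM N ⟨fire N mm.val t, hmem⟩
            (hNew N t mm.val ⟨fire N mm.val t, hmem⟩ h) (Fnew N t mm.val F),
          encC N ⟨fire N mm.val t, hmem⟩
            (hNew N t mm.val ⟨fire N mm.val t, hmem⟩ h) (Fnew N t mm.val F) τ'), ?_, ?_⟩
        · exact ⟨_, Relation.ReflTransGen.refl,
            ⟨Sum.inr (t, mm, h, fun k => if k ∈ F then true else false), rfl,
              stepB_reorg hnn htF hpend ⟨fire N mm.val t, hmem⟩ rfl hpers' hnew'⟩⟩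
        · refine ⟨⟨fire N mm.val t, hmem⟩, _, _, rfl, hre', hinv.1, hinv.2, ?_, rfl, rfl⟩
          rintro k ⟨hkF, hkt, hkC⟩
          have hp : pers N mm.val t k := pers_of_not_Cset (hpend k hkF).1 hkt hkC
          exact ⟨pers_enab_after hp, (hpers' k hp).trans (hpend k hkF).2⟩
      · have hpendU : ∀ k ∈ F ∪ {t}, enabled N mm.val k ∧ τ k = 0 := by
          rintro k (hk | hk)
          · exact hpend k hk
          · cases hk; exact ⟨htE, hτt⟩
        refine ⟨(encM N ⟨fire N mm.val t, hmem⟩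
            (hNew N t mm.val ⟨fire N mm.val t, hmem⟩ h) (Fnew N t mm.val (F ∪ {t})),
          encC N ⟨fire N mm.val t, hmem⟩
            (hNew N t mm.val ⟨fire N mm.val t, hmem⟩ h)
            (Fnew N t mm.val (F ∪ {t})) τ'), ?_, ?_⟩
        · exact ⟨(encM N mm h (F ∪ {t}), encC N mm h (F ∪ {t}) τ),
            Relation.ReflTransGen.single
              ⟨Sum.inl (t, h t), rfl, stepB_commit hnn htE htF hτt⟩,
            ⟨Sum.inr (t, mm, h, fun k =>
                @ite Bool (k ∈ F ∪ {t}) (Classical.propDecidable _) true false), rfl,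
              stepB_reorg hnn (Or.inr rfl) hpendU ⟨fire N mm.val t, hmem⟩ rfl
                hpers' hnew'⟩⟩
        · refine ⟨⟨fire N mm.val t, hmem⟩, _, _, rfl, hre', hinv.1, hinv.2, ?_, rfl, rfl⟩
          rintro k ⟨hkF, hkt, hkC⟩
          have hkF' : k ∈ F := hkF.elim id (fun he => absurd he hkt)
          have hp : pers N mm.val t k := pers_of_not_Cset (hpend k hkF').1 hkt hkC
          exact ⟨pers_enab_after hp, (hpers' k hp).trans (hpend k hkF').2⟩
    | delay θ =>
      replace hstep : delayStep N (mm.val, τ) θ s₁' := hstep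
      obtain ⟨m', τ'⟩ := s₁'
      replace hstep : delayStep N (mm.val, τ) θ (m', τ') := hstep
      have hre' : (SG N).Reach (m', τ') := reach_tail hre (l := TLabel.delay θ) hstep
      have hm' : m' = mm.val := hstep.2.2.1
      subst hm'
      have hτ' : τ' = fun k => if enabled N mm.val k then τ k - θ else 0 := hstep.2.2.2
      subst hτ'
      have hθ : 0 ≤ θ := hstep.1
      have hθτ : ∀ k, enabled N mm.val k → θ ≤ τ k := hstep.2.1
      by_cases hF : F = ∅
      · subst hF
        refine ⟨(encM N mm h ∅,
          encC N mm h ∅ (fun k => if enabled N mm.val k then τ k - θ else 0)), ?_, ?_⟩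
        · refine ⟨_, Relation.ReflTransGen.refl, ⟨hθ, ?_, rfl, delay_eqB.symm⟩⟩
          rintro (⟨k, mh⟩ | x) htr
          · obtain ⟨hk, hkF, hmh⟩ := en_commit.mp htr
            show θ ≤ encC N mm h ∅ τ (Sum.inl (k, mh))
            rw [encC_commit, if_pos ⟨hk, hkF, hmh⟩]
            exact hθτ k hk
          · exact absurd htr (no_reorg_enabled x)
        · refine ⟨mm, h, ∅, rfl, hre', ?_, ?_, ?_, rfl, rfl⟩
          · intro k hk
            show 0 ≤ (if enabled N mm.val k then τ k - θ else 0)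
            rw [if_pos hk]
            exact sub_nonneg.mpr (hθτ k hk)
          · intro k hk
            show (if enabled N mm.val k then τ k - θ else 0) = 0
            rw [if_neg hk]
          · exact fun k hk => absurd hk (Set.notMem_empty k)
      · obtain ⟨t, htF⟩ := Set.nonempty_iff_ne_empty.mpr hF
        have hθ0 : θ = 0 := by
          refine le_antisymm ?_ hθ
          have h0 := hθτ t (hpend t htF).1
          rw [(hpend t htF).2] at h0
          exact h0
        subst hθ0
        rw [show (fun k => if enabled N mm.val k then τ k - 0 else 0) = τ from
          delay_eqA0 hz] at hre' ⊢
        refine ⟨(encM N mm h F, encC N mm h F τ), ?_, ?_⟩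
        · exact ⟨_, Relation.ReflTransGen.refl,
            ⟨le_rfl, encC_nonneg hnn, rfl, delay_eqB0.symm⟩⟩
        · exact ⟨mm, h, F, rfl, hre', hnn, hz, hpend, rfl, rfl⟩
  · -- A simulates B
    intro s₂ α s₂' hstep s₁ hrel
    obtain ⟨mm, h, F, hval, hre, hnn, hz, hpend, h2m, h2c⟩ := hrel
    have hs₂ : s₂ = (encM N mm h F, encC N mm h F s₁.2) := Prod.ext h2m h2c
    subst hs₂
    obtain ⟨m, τ⟩ := s₁
    replace hval : m = mm.val := hval
    subst hval
    replace hnn : ∀ k, enabled N mm.val k → 0 ≤ τ k := hnn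
    replace hz : ∀ k, ¬ enabled N mm.val k → τ k = 0 := hz
    replace hpend : ∀ t ∈ F, enabled N mm.val t ∧ τ t = 0 := hpend
    cases α with
    | silent =>
      obtain ⟨tr, hlab, hd⟩ := hstep
      rcases tr with ⟨t, mh⟩ | ⟨t, mc, g, b⟩
      swap
      · simp [lab] at hlab
      obtain ⟨htE, htF, hτt, hs2'⟩ := inv_commit hnn hd
      refine ⟨(mm.val, τ), Relation.ReflTransGen.refl,
        mm, h, F ∪ {t}, rfl, hre, hnn, hz, ?_, ?_, ?_⟩
      · rintro k (hk | hk)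
        · exact hpend k hk
        · cases hk; exact ⟨htE, hτt⟩
      · rw [hs2']
      · rw [hs2']
    | disc a =>
      obtain ⟨tr, hlab, hd⟩ := hstep
      rcases tr with ⟨t, mh⟩ | ⟨t, mc, g, b⟩
      · simp [lab] at hlab
      · have hta : t = a := by simpa [lab] using hlab
        subst hta
        obtain ⟨hmc0, htF, -⟩ := en_reorg_elim hd.1
        have htE := (hpend t htF).1
        have hτt := (hpend t htF).2
        have hA0 := Astep_exists hweak (m := mm.val) (τ := τ) htE hτt hnn
        have hre0 := reach_tail hre (l := TLabel.disc t) hA0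
        have hmem : fire N mm.val t ∈ Msk N := ⟨_, hre0⟩
        obtain ⟨htF', hA, hs2'⟩ :=
          inv_reorg hweak hnn hpend ⟨fire N mm.val t, hmem⟩ rfl hd
        have hinv := inv_preserve hweak hnn hA
        refine ⟨_, ⟨(mm.val, τ), Relation.ReflTransGen.refl, hA⟩, ?_⟩
        refine ⟨⟨fire N mm.val t, hmem⟩,
          hNew N t mm.val ⟨fire N mm.val t, hmem⟩ h, Fnew N t mm.val F, rfl,
          reach_tail hre (l := TLabel.disc t) hA, hinv.1, hinv.2, ?_, ?_, ?_⟩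
        · rintro k ⟨hkF, hkt, hkC⟩
          have hp : pers N mm.val t k := pers_of_not_Cset (hpend k hkF).1 hkt hkC
          exact ⟨pers_enab_after hp, (pers_clock hweak hnn hA hp).trans (hpend k hkF).2⟩
        · rw [hs2']
        · conv_lhs => rw [hs2']
    | delay θ =>
      have hθ : 0 ≤ θ := hstep.1
      have hb := hstep.2.1
      have h1' := hstep.2.2.1
      have h2' := hstep.2.2.2
      by_cases hF : F = ∅
      · subst hF
        have hθτ : ∀ k, enabled N mm.val k → θ ≤ τ k := by
          intro k hk
          have h0 := hb (Sum.inl (k, h k)) (en_commit.mpr ⟨hk, fun hf => hf, rfl⟩)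
          have h0' : θ ≤ encC N mm h ∅ τ (Sum.inl (k, h k)) := h0
          rw [encC_commit, if_pos ⟨hk, fun hf => hf, rfl⟩] at h0'
          exact h0'
        refine ⟨(mm.val, fun k => if enabled N mm.val k then τ k - θ else 0),
          ⟨(mm.val, τ), Relation.ReflTransGen.refl, ⟨hθ, hθτ, rfl, rfl⟩⟩, ?_⟩
        refine ⟨mm, h, ∅, rfl,
          reach_tail hre (l := TLabel.delay θ) ⟨hθ, hθτ, rfl, rfl⟩, ?_, ?_, ?_, ?_, ?_⟩
        · intro k hk
          show 0 ≤ (if enabled N mm.val k then τ k - θ else 0)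
          rw [if_pos hk]
          exact sub_nonneg.mpr (hθτ k hk)
        · intro k hk
          show (if enabled N mm.val k then τ k - θ else 0) = 0
          rw [if_neg hk]
        · exact fun k hk => absurd hk (Set.notMem_empty k)
        · rw [h1']
        · rw [h2']; exact delay_eqB
      · obtain ⟨t, htF⟩ := Set.nonempty_iff_ne_empty.mpr hF
        have hpendE : ∀ k ∈ F, enabled N mm.val k := fun k hk => (hpend k hk).1
        have hθ0 : θ = 0 := by
          have h0 := hb (Sum.inr (t, mm, h, fun k => if k ∈ F then true else false))
            (en_reorg_true htF hpendE)
          have h0' : θ ≤ (0 : ℝ) := h0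
          exact le_antisymm h0' hθ
        subst hθ0
        refine ⟨(mm.val, τ), ⟨(mm.val, τ), Relation.ReflTransGen.refl,
          ⟨le_rfl, fun k hk => hnn k hk, rfl, (delay_eqA0 hz).symm⟩⟩, ?_⟩
        refine ⟨mm, h, F, rfl, hre, hnn, hz, hpend, ?_, ?_⟩
        · rw [h1']
        · rw [h2']; exact delay_eqB0
  · -- initial states, A to B
    intro s₁ hinit
    obtain ⟨m, τ⟩ := s₁
    replace hinit : initState N (m, τ) := hinit
    have hm : m = N.m0 := hinit.1
    subst hm
    exact ⟨(encM N (mm0 N) (fun _ => mm0 N) ∅, encC N (mm0 N) (fun _ => mm0 N) ∅ τ),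
      initB_of_initA hinit, relInit_A hinit⟩
  · -- initial states, B to A
    intro s₂ hinit
    obtain ⟨s₁, hA, hR⟩ := initA_of_initB hinit
    exact ⟨s₁, hA, hR⟩

end
end

section
/- For every Time Petri Net N with a finite set of reachable markings, there exists a 1-safe Time Petri Net N' (every marking reachable in its state graph assigns at most one token to each place), together with a labelling of the transitions of N' by T ∪ {τ̂} (τ̂ silent), such that the state graph of N and the state graph of N' are weakly timed bisimilar. -/
open scoped Classical

noncomputable section

variable {P T P' T' : Type}

/-- `N` is 1-safe: every reachable marking assigns at most one token to each place. -/
def OneSafe {P T : Type} (N : DTPN P T) : Prop :=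
  ∀ s, (SG N).Reach s → ∀ p, s.1 p ≤ 1

/-! ### Auxiliary construction for the proof of Corollary 1 -/

namespace OneSafeConstruction

/-- The set of reachable markings of `N`. -/
def Mset (N : DTPN P T) : Set (P → ℕ) := {m : P → ℕ | ∃ τ, (SG N).Reach (m, τ)}

/-- The singleton time interval `[x,x]`. -/
def ptI (x : ℝ) (hx : 0 ≤ x) : TimeInterval := ⟨x, x, hx, le_refl _⟩

lemma ptI_mem {x : ℝ} {hx : 0 ≤ x} {y : ℝ} : (ptI x hx).mem y ↔ y = x := by
  unfold ptI TimeInterval.mem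
  simp only [EReal.coe_le_coe_iff]
  constructor
  · rintro ⟨h1, h2⟩; exact le_antisymm h2 h1
  · rintro rfl; exact ⟨le_rfl, le_rfl⟩

/-- The transitions "affected" by the firing of `t` from `m` : enabled but not
persistent. -/
def AfS (N : DTPN P T) (m : P → ℕ) (t j : T) : Prop := enabled N m j ∧ ¬ pers N m t j

/-- Places of the 1-safe net: a place `pl m` for every reachable marking `m`,
and places `tk k` ("`k` enabled, timer running") and `go k` ("`k` enabled with
time `0` remaining") for every transition `k` of `N`. -/
abbrev P2 (N : DTPN P T) : Type := (Mset N) ⊕ (T ⊕ T)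

/-- Transitions of the 1-safe net: a silent "timer" transition `Sum.inl k` for
every `k`, and visible copies `Sum.inr (t, m, S)` of each transition `t`,
for every reachable marking `m` and every pattern `S` recording which affected
transitions currently are in the `go` state. -/
abbrev T2 (N : DTPN P T) : Type := T ⊕ (T × (Mset N) × (T → Bool))

/-- The 1-safe net. -/
def N2 (N : DTPN P T) : DTPN (P2 N) (T2 N) where
  Pre := fun t' p => match t', p with
    | Sum.inl k, Sum.inr (Sum.inl j) => if j = k then 1 else 0
    | Sum.inl _, _ => 0
    | Sum.inr (t, mh, S), Sum.inl m' => if m' = mh then 1 else 0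
    | Sum.inr (t, mh, S), Sum.inr (Sum.inl j) =>
        if AfS N (mh : P → ℕ) t j ∧ S j = false ∧ j ≠ t then 1 else 0
    | Sum.inr (t, mh, S), Sum.inr (Sum.inr j) =>
        if j = t ∨ (AfS N (mh : P → ℕ) t j ∧ S j = true) then 1 else 0
  Post := fun t' p => match t', p with
    | Sum.inl k, Sum.inr (Sum.inr j) => if j = k then 1 else 0
    | Sum.inl _, _ => 0
    | Sum.inr (t, mh, _), Sum.inl m' => if (m' : P → ℕ) = fire N (mh : P → ℕ) t then 1 else 0
    | Sum.inr (t, mh, S), Sum.inr (Sum.inl j) =>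
        if enabled N (fire N (mh : P → ℕ) t) j ∧
            (AfS N (mh : P → ℕ) t j ∨ ¬ enabled N (mh : P → ℕ) j) then 1 else 0
    | Sum.inr (_, _, _), Sum.inr (Sum.inr _) => 0
  m0 := fun p => match p with
    | Sum.inl m' => if (m' : P → ℕ) = N.m0 then 1 else 0
    | Sum.inr (Sum.inl j) => if enabled N N.m0 j then 1 else 0
    | Sum.inr (Sum.inr _) => 0
  Is := fun t' _ => match t' with
    | Sum.inl k => N.Is k N.m0
    | Sum.inr _ => ptI 0 le_rfl
  Idyn := fun _ _ θ => ptI (max θ 0) (le_max_right _ _)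

/-- Labelling: timers are silent, copies of `t` are labelled `t`. -/
def lab (N : DTPN P T) : T2 N → Option T := fun t' => match t' with
  | Sum.inl _ => none
  | Sum.inr (t, _, _) => some t

/-- The marking of `N2 N` encoding marking `m` of `N` with go-set `g`. -/
def mark (N : DTPN P T) (m : P → ℕ) (g : T → Prop) : P2 N → ℕ := fun p => match p with
  | Sum.inl m' => if (m' : P → ℕ) = m then 1 else 0
  | Sum.inr (Sum.inl j) => if enabled N m j ∧ ¬ g j then 1 else 0
  | Sum.inr (Sum.inr j) => if g j then 1 else 0

/-- The clock function of `N2 N` encoding the clock function `ν` of `N`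
with go-set `g`. -/
def clk (N : DTPN P T) (ν : T → ℝ) (g : T → Prop) : T2 N → ℝ := fun t' => match t' with
  | Sum.inl j => if g j then 0 else ν j
  | Sum.inr _ => 0

/-- The bisimulation relation. -/
def RR (N : DTPN P T) (s₁ : NState P T) (s₂ : NState (P2 N) (T2 N)) : Prop :=
  (SG N).Reach s₁ ∧ ∃ g : T → Prop,
    (∀ j, g j → enabled N s₁.1 j ∧ s₁.2 j = 0) ∧
    s₂.1 = mark N s₁.1 g ∧ s₂.2 = clk N s₁.2 g



section Red
variable {N : DTPN P T} {k t j : T} {m' mh : Mset N} {S : T → Bool} {m : P → ℕ}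
  {g : T → Prop} {ν : T → ℝ} {c : T × (Mset N) × (T → Bool)}

lemma Pre_inl_pl : (N2 N).Pre (Sum.inl k) (Sum.inl m') = 0 := rfl
lemma Pre_inl_tk : (N2 N).Pre (Sum.inl k) (Sum.inr (Sum.inl j)) = if j = k then 1 else 0 := rfl
lemma Pre_inl_go : (N2 N).Pre (Sum.inl k) (Sum.inr (Sum.inr j)) = 0 := rfl
lemma Pre_inr_pl : (N2 N).Pre (Sum.inr (t, mh, S)) (Sum.inl m') = if m' = mh then 1 else 0 := rfl
lemma Pre_inr_tk : (N2 N).Pre (Sum.inr (t, mh, S)) (Sum.inr (Sum.inl j)) =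
    if AfS N (mh : P → ℕ) t j ∧ S j = false ∧ j ≠ t then 1 else 0 := rfl
lemma Pre_inr_go : (N2 N).Pre (Sum.inr (t, mh, S)) (Sum.inr (Sum.inr j)) =
    if j = t ∨ (AfS N (mh : P → ℕ) t j ∧ S j = true) then 1 else 0 := rfl
lemma Post_inl_pl : (N2 N).Post (Sum.inl k) (Sum.inl m') = 0 := rfl
lemma Post_inl_tk : (N2 N).Post (Sum.inl k) (Sum.inr (Sum.inl j)) = 0 := rfl
lemma Post_inl_go : (N2 N).Post (Sum.inl k) (Sum.inr (Sum.inr j)) = if j = k then 1 else 0 := rfl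
lemma Post_inr_pl : (N2 N).Post (Sum.inr (t, mh, S)) (Sum.inl m') =
    if (m' : P → ℕ) = fire N (mh : P → ℕ) t then 1 else 0 := rfl
lemma Post_inr_tk : (N2 N).Post (Sum.inr (t, mh, S)) (Sum.inr (Sum.inl j)) =
    if enabled N (fire N (mh : P → ℕ) t) j ∧
      (AfS N (mh : P → ℕ) t j ∨ ¬ enabled N (mh : P → ℕ) j) then 1 else 0 := rfl
lemma Post_inr_go : (N2 N).Post (Sum.inr (t, mh, S)) (Sum.inr (Sum.inr j)) = 0 := rfl
lemma mark_pl : mark N m g (Sum.inl m') = if (m' : P → ℕ) = m then 1 else 0 := rfl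
lemma mark_tk : mark N m g (Sum.inr (Sum.inl j)) = if enabled N m j ∧ ¬ g j then 1 else 0 := rfl
lemma mark_go : mark N m g (Sum.inr (Sum.inr j)) = if g j then 1 else 0 := rfl
lemma clk_inl : clk N ν g (Sum.inl j) = if g j then 0 else ν j := rfl
lemma clk_inr : clk N ν g (Sum.inr c) = 0 := rfl
lemma Is2_inl {μ : P2 N → ℕ} : (N2 N).Is (Sum.inl k) μ = N.Is k N.m0 := rfl
lemma Is2_inr {μ : P2 N → ℕ} : (N2 N).Is (Sum.inr (t, mh, S)) μ = ptI 0 le_rfl := rfl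
lemma fire_def {t' : T2 N} {μ : P2 N → ℕ} {p : P2 N} :
    fire (N2 N) μ t' p = μ p - (N2 N).Pre t' p + (N2 N).Post t' p := rfl

end Red

section Lemmas

variable {N : DTPN P T}

lemma reach_good {s : NState P T} (h : (SG N).Reach s) :
    (∀ k, ¬ enabled N s.1 k → s.2 k = 0) ∧ (∀ k, 0 ≤ s.2 k) := by
  obtain ⟨s0, h0, hsteps⟩ := h
  induction hsteps with
  | refl =>
    obtain ⟨hm, hen, hnen⟩ := h0
    refine ⟨fun k hk => hnen k (by rwa [hm] at hk), fun k => ?_⟩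
    by_cases hk : enabled N N.m0 k
    · exact le_trans (N.Is k N.m0).lo_nonneg (hen k hk).1
    · rw [hnen k hk]
  | @tail b c hab hbc ih =>
    obtain ⟨l, hl⟩ := hbc
    match l with
    | TLabel.silent => exact absurd hl id
    | TLabel.disc t =>
      obtain ⟨hen, hz, hm, hpers, hnew, hdis⟩ := hl
      refine ⟨hdis, fun k => ?_⟩
      by_cases hk : enabled N c.1 k
      · by_cases hp : pers N b.1 t k
        · exact le_trans (N.Idyn k c.1 (b.2 k)).lo_nonneg (hpers k hp).1
        · exact le_trans (N.Is k c.1).lo_nonneg (hnew k hk hp).1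
      · rw [hdis k hk]
    | TLabel.delay θ =>
      obtain ⟨hθ, hbound, hm, hν⟩ := hl
      refine ⟨fun k hk => ?_, fun k => ?_⟩ <;> rw [hν]
      · rw [hm] at hk; simp [if_neg hk]
      · by_cases hk : enabled N b.1 k
        · simpa [hk] using sub_nonneg.mpr (hbound k hk)
        · simp [hk]

lemma pers_enabled_fire {m : P → ℕ} {t j : T} (h : pers N m t j) :
    enabled N (fire N m t) j := by
  intro p
  exact le_trans (h.2.2 p) (Nat.le_add_right _ _)

lemma mark_congr {m : P → ℕ} {g g' : T → Prop} (h : ∀ j, g j ↔ g' j) :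
    mark N m g = mark N m g' := by
  funext p
  rcases p with m' | j | j
  · rfl
  · exact if_congr (by rw [h j]) rfl rfl
  · exact if_congr (h j) rfl rfl

lemma clk_congr {ν : T → ℝ} {g g' : T → Prop} (h : ∀ j, g j ↔ g' j) :
    clk N ν g = clk N ν g' := by
  funext t'
  rcases t' with j | c
  · exact if_congr (h j) rfl rfl
  · rfl

lemma en2_inl {m : P → ℕ} {g : T → Prop} {k : T} :
    enabled (N2 N) (mark N m g) (Sum.inl k) ↔ enabled N m k ∧ ¬ g k := by
  constructor
  · intro h
    have h1 := h (Sum.inr (Sum.inl k))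
    rw [Pre_inl_tk, mark_tk, if_pos rfl] at h1
    by_contra hc
    rw [if_neg hc] at h1; omega
  · rintro ⟨h1, h2⟩ p
    rcases p with m' | j | j
    · rw [Pre_inl_pl]; omega
    · rw [Pre_inl_tk, mark_tk]
      split_ifs with hj hc
      · omega
      · exact absurd ⟨hj ▸ h1, hj ▸ h2⟩ hc
      · omega
      · omega
    · rw [Pre_inl_go]; omega

lemma en2_inr {m : P → ℕ} {g : T → Prop} {t : T} {mh : Mset N} {S : T → Bool} :
    enabled (N2 N) (mark N m g) (Sum.inr (t, mh, S)) ↔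
      ((mh : P → ℕ) = m ∧ g t ∧ ∀ j, AfS N m t j →
        ((S j = true → g j) ∧ (S j = false → j ≠ t → ¬ g j))) := by
  constructor
  · intro h
    have hpl := h (Sum.inl mh)
    rw [Pre_inr_pl, mark_pl, if_pos rfl] at hpl
    have hmh : (mh : P → ℕ) = m := by
      by_contra hc; rw [if_neg hc] at hpl; omega
    have hgo := h (Sum.inr (Sum.inr t))
    rw [Pre_inr_go, mark_go, if_pos (Or.inl rfl)] at hgo
    have hgt : g t := by by_contra hc; rw [if_neg hc] at hgo; omega
    refine ⟨hmh, hgt, fun j hA => ⟨fun hSj => ?_, fun hSj hjt => ?_⟩⟩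
    · have hgoj := h (Sum.inr (Sum.inr j))
      rw [Pre_inr_go, mark_go, if_pos (Or.inr ⟨hmh ▸ hA, hSj⟩)] at hgoj
      by_contra hc; rw [if_neg hc] at hgoj; omega
    · have htkj := h (Sum.inr (Sum.inl j))
      rw [Pre_inr_tk, mark_tk, if_pos ⟨hmh ▸ hA, hSj, hjt⟩] at htkj
      intro hc
      rw [if_neg (fun hx => hx.2 hc)] at htkj
      omega
  · rintro ⟨hmh, hgt, hj⟩ p
    rcases p with m' | j | j
    · rw [Pre_inr_pl, mark_pl]
      split_ifs with h1 h2
      · omega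
      · exact absurd (h1 ▸ hmh) h2
      · omega
      · omega
    · rw [Pre_inr_tk, mark_tk, hmh]
      split_ifs with h1 h2
      · omega
      · exact absurd ⟨h1.1.1, (hj _ h1.1).2 h1.2.1 h1.2.2⟩ h2
      · omega
      · omega
    · rw [Pre_inr_go, mark_go, hmh]
      split_ifs with h1 h2
      · omega
      · rcases h1 with rfl | ⟨hA, hSj⟩
        · exact absurd hgt h2
        · exact absurd ((hj _ hA).1 hSj) h2
      · omega
      · omega

lemma fire2_inl {m : P → ℕ} {g : T → Prop} {k : T} (hk : enabled N m k) (hgk : ¬ g k) :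
    fire (N2 N) (mark N m g) (Sum.inl k) = mark N m (fun j => g j ∨ j = k) := by
  funext p
  rcases p with m' | j | j
  · rw [fire_def, Pre_inl_pl, Post_inl_pl]; rfl
  · rw [fire_def, Pre_inl_tk, Post_inl_tk, mark_tk, mark_tk]
    by_cases hj : j = k
    · subst hj; simp [hk, hgk]
    · simp [hj]
  · rw [fire_def, Pre_inl_go, Post_inl_go, mark_go, mark_go]
    by_cases hj : j = k
    · subst hj; simp [hgk]
    · simp [hj]

lemma fire2_inr {m : P → ℕ} {g : T → Prop} {t : T} {mh : Mset N} {S : T → Bool}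
    (hmh : (mh : P → ℕ) = m) (hgt : g t)
    (hS : ∀ j, AfS N m t j → j ≠ t → (S j = true ↔ g j))
    (hg : ∀ j, g j → enabled N m j) :
    fire (N2 N) (mark N m g) (Sum.inr (t, mh, S)) =
      mark N (fire N m t) (fun j => g j ∧ pers N m t j) := by
  funext p
  rcases p with m' | j | j
  · rw [fire_def, Pre_inr_pl, Post_inr_pl, mark_pl, mark_pl, hmh]
    have he : (m' = mh) ↔ ((m' : P → ℕ) = m) := by rw [← hmh, Subtype.ext_iff]
    rw [if_congr he rfl rfl]
    split_ifs <;> omega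
  · rw [fire_def, Pre_inr_tk, Post_inr_tk, mark_tk, mark_tk, hmh]
    by_cases hp : pers N m t j
    · have hA : ¬ AfS N m t j := fun h => h.2 hp
      have he : enabled N m j := hp.2.1
      have he2 : enabled N (fire N m t) j := pers_enabled_fire hp
      by_cases hgj : g j
      · simp [hA, he, hgj, hp, he2]
      · simp [hA, he, hgj, hp, he2]
    · by_cases he : enabled N m j
      · by_cases hjt : j = t
        · subst hjt
          have hA : AfS N m j j := ⟨he, hp⟩
          simp [hgt, hp, hA]
        · have hA : AfS N m t j := ⟨he, hp⟩
          by_cases hgj : g j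
          · have hSj : S j = true := (hS j hA hjt).mpr hgj
            simp [hA, hSj, he, hgj, hp]
          · have hSj : S j = false := by
              cases hSb : S j
              · rfl
              · exact absurd ((hS j hA hjt).mp hSb) hgj
            simp [hA, hSj, hjt, he, hgj, hp]
      · have hA : ¬ AfS N m t j := fun h => he h.1
        simp [hA, he, hp]
  · rw [fire_def, Pre_inr_go, Post_inr_go, mark_go, mark_go, hmh]
    by_cases hjt : j = t
    · subst hjt
      have hnp : ¬ pers N m j j := fun hp => hp.1 rfl
      simp [hgt, hnp]
    · by_cases hgj : g j
      · by_cases hp : pers N m t j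
        · have hA : ¬ AfS N m t j := fun h => h.2 hp
          simp [hgj, hp, hjt, hA]
        · have hA : AfS N m t j := ⟨hg j hgj, hp⟩
          have hSj : S j = true := (hS j hA hjt).mpr hgj
          simp [hgj, hp, hA, hSj]
      · simp [hgj]

lemma pers2_inl_inl {m : P → ℕ} {g : T → Prop} {k j : T} :
    pers (N2 N) (mark N m g) (Sum.inl k) (Sum.inl j) ↔
      j ≠ k ∧ enabled N m j ∧ ¬ g j := by
  constructor
  · rintro ⟨hne, hen, -⟩
    have hjk : j ≠ k := fun h => hne (congrArg _ h)
    obtain ⟨h1, h2⟩ := en2_inl.mp hen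
    exact ⟨hjk, h1, h2⟩
  · rintro ⟨hjk, h1, h2⟩
    refine ⟨fun h => hjk (Sum.inl.inj h), en2_inl.mpr ⟨h1, h2⟩, fun p => ?_⟩
    rcases p with m' | j' | j'
    · rw [Pre_inl_pl]; omega
    · rw [Pre_inl_tk, Pre_inl_tk, mark_tk]
      by_cases hj' : j' = j
      · subst hj'
        rw [if_pos rfl, if_pos ⟨h1, h2⟩, if_neg hjk]
      · rw [if_neg hj']; omega
    · rw [Pre_inl_go]; omega

lemma pers2_inr_inl {m : P → ℕ} {g : T → Prop} {t j : T} {mh : Mset N} {S : T → Bool}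
    (hmh : (mh : P → ℕ) = m) (hgt : g t)
    (hS : ∀ j', AfS N m t j' → j' ≠ t → (S j' = true ↔ g j')) :
    pers (N2 N) (mark N m g) (Sum.inr (t, mh, S)) (Sum.inl j) ↔
      enabled N m j ∧ ¬ g j ∧ pers N m t j := by
  constructor
  · rintro ⟨hne, hen, hall⟩
    obtain ⟨h1, h2⟩ := en2_inl.mp hen
    refine ⟨h1, h2, ?_⟩
    by_contra hp
    have hjt : j ≠ t := fun h => h2 (h ▸ hgt)
    have hA : AfS N m t j := ⟨h1, hp⟩
    have hSj : S j = false := by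
      cases hSb : S j
      · rfl
      · exact absurd ((hS j hA hjt).mp hSb) h2
    have htk := hall (Sum.inr (Sum.inl j))
    rw [Pre_inl_tk, if_pos rfl, Pre_inr_tk, mark_tk, hmh,
      if_pos ⟨h1, h2⟩, if_pos ⟨hA, hSj, hjt⟩] at htk
    omega
  · rintro ⟨h1, h2, hp⟩
    have hA : ¬ AfS N m t j := fun h => h.2 hp
    refine ⟨fun h => Sum.inl_ne_inr h, en2_inl.mpr ⟨h1, h2⟩, fun p => ?_⟩
    rcases p with m' | j' | j'
    · rw [Pre_inl_pl]; omega
    · rw [Pre_inl_tk, Pre_inr_tk, mark_tk, hmh]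
      by_cases hj' : j' = j
      · subst hj'
        rw [if_pos rfl, if_pos ⟨h1, h2⟩, if_neg (fun hx => hA hx.1)]
      · rw [if_neg hj']; omega
    · rw [Pre_inl_go]; omega

lemma not_pers2_inr_inr {m : P → ℕ} {g : T → Prop} {t : T} {mh : Mset N} {S : T → Bool}
    {c' : T × (Mset N) × (T → Bool)} (hmh : (mh : P → ℕ) = m) :
    ¬ pers (N2 N) (mark N m g) (Sum.inr (t, mh, S)) (Sum.inr c') := by
  obtain ⟨t₂, mh₂, S₂⟩ := c'
  rintro ⟨hne, hen, hall⟩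
  have hmh₂ : (mh₂ : P → ℕ) = m := (en2_inr.mp hen).1
  have heq : mh₂ = mh := Subtype.ext (hmh₂.trans hmh.symm)
  have htk := hall (Sum.inl mh₂)
  rw [Pre_inr_pl, if_pos rfl, Pre_inr_pl, mark_pl, if_pos hmh₂, if_pos heq] at htk
  omega

lemma m0_eq : (N2 N).m0 = mark N N.m0 (fun _ => False) := by
  funext p
  rcases p with m' | j | j
  · rfl
  · rw [show (N2 N).m0 (Sum.inr (Sum.inl j)) = (if enabled N N.m0 j then 1 else 0) from rfl,
      mark_tk]
    simp
  · rw [show (N2 N).m0 (Sum.inr (Sum.inr j)) = 0 from rfl, mark_go]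
    simp

lemma idyn2_mem {t' : T2 N} {μ : P2 N → ℕ} {θ x : ℝ} :
    ((N2 N).Idyn t' μ θ).mem x ↔ x = max θ 0 := ptI_mem

lemma step_silent2 {m : P → ℕ} {ν : T → ℝ} {g : T → Prop} {k : T}
    (hk : enabled N m k) (hgk : ¬ g k) (hνk : ν k = 0)
    (hgood : ∀ j, ¬ enabled N m j → ν j = 0) (hnn : ∀ j, 0 ≤ ν j) :
    discStep (N2 N) (mark N m g, clk N ν g) (Sum.inl k)
      (mark N m (fun j => g j ∨ j = k), clk N ν (fun j => g j ∨ j = k)) := by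
  dsimp only [discStep]
  refine ⟨en2_inl.mpr ⟨hk, hgk⟩, by rw [clk_inl, if_neg hgk, hνk], (fire2_inl hk hgk).symm,
    ?_, ?_, ?_⟩
  · rintro (j | c) hp
    · obtain ⟨hjk, hj, hgj⟩ := pers2_inl_inl.mp hp
      rw [idyn2_mem, clk_inl, clk_inl, if_neg hgj, if_neg (by simp [hgj, hjk]),
        max_eq_left (hnn j)]
    · rw [idyn2_mem, clk_inr, clk_inr]
      simp
  · rintro (j | c) hen hnp
    · obtain ⟨hj, hgj⟩ := en2_inl.mp hen
      exact absurd (pers2_inl_inl.mpr ⟨fun h => hgj (Or.inr h), hj, fun h => hgj (Or.inl h)⟩) hnp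
    · rw [Is2_inr, clk_inr, ptI_mem]
  · rintro (j | c) hen
    · rw [en2_inl] at hen
      rw [clk_inl]
      split_ifs with h1
      · rfl
      · exact hgood j (fun h => hen ⟨h, fun h2 => h1 h2⟩)
    · rw [clk_inr]

lemma step_vis2 {m : P → ℕ} {ν ν₂ : T → ℝ} {g : T → Prop} {t : T} (hmem : m ∈ Mset N)
    (htpn : IsTPN N)
    (hgood : ∀ j, ¬ enabled N m j → ν j = 0) (hnn : ∀ j, 0 ≤ ν j)
    (hg : ∀ j, g j → enabled N m j ∧ ν j = 0) (hgt : g t)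
    (hd : discStep N (m, ν) t (fire N m t, ν₂)) :
    discStep (N2 N) (mark N m g, clk N ν g)
      (Sum.inr (t, ⟨m, hmem⟩, fun j => decide (g j)))
      (mark N (fire N m t) (fun j => g j ∧ pers N m t j),
       clk N ν₂ (fun j => g j ∧ pers N m t j)) := by
  dsimp only [discStep]
  have hS : ∀ j, AfS N m t j → j ≠ t → ((fun j => decide (g j)) j = true ↔ g j) :=
    fun j _ _ => decide_eq_true_iff
  have hfi := fire2_inr (S := fun j => decide (g j)) (mh := ⟨m, hmem⟩) rfl hgt hS
    (fun j hj => (hg j hj).1)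
  refine ⟨?_, rfl, hfi.symm, ?_, ?_, ?_⟩
  · refine en2_inr.mpr ⟨rfl, hgt, fun j hA => ⟨fun hSj => decide_eq_true_iff.mp hSj,
      fun hSj _ hgj => ?_⟩⟩
    rw [decide_eq_true_iff.mpr hgj] at hSj
    exact Bool.noConfusion hSj
  · rintro (j | c) hp
    · obtain ⟨hj, hgj, hpj⟩ := (pers2_inr_inl rfl hgt hS).mp hp
      rw [idyn2_mem, clk_inl, clk_inl, if_neg hgj, if_neg (fun h => hgj h.1),
        max_eq_left (hnn j)]
      exact ((htpn.1 j (fire N m t) (ν j) (ν₂ j) (hnn j)).mp (hd.2.2.2.1 j hpj))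
    · exact absurd hp (not_pers2_inr_inr rfl)
  · rintro (j | c) hen hnp
    · obtain ⟨hj, hgj⟩ := en2_inl.mp hen
      by_cases hpj : pers N m t j
      · exact absurd ((pers2_inr_inl rfl hgt hS).mpr
          ⟨hpj.2.1, fun hgc => hgj ⟨hgc, hpj⟩, hpj⟩) hnp
      · rw [Is2_inl, clk_inl, if_neg hgj]
        have := hd.2.2.2.2.1 j hj hpj
        rwa [htpn.2 j (fire N m t) N.m0] at this
    · rw [Is2_inr, clk_inr, ptI_mem]
  · rintro (j | c) hen
    · rw [en2_inl] at hen
      rw [clk_inl]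
      split_ifs with h1
      · rfl
      · exact hd.2.2.2.2.2 j (fun h => hen ⟨h, h1⟩)
    · rw [clk_inr]

lemma reach_tail {S L : Type} {A : TTS S L} {s s' : S} {l : L}
    (h : A.Reach s) (hs : A.step s l s') : A.Reach s' := by
  obtain ⟨s0, h0, hst⟩ := h
  exact ⟨s0, h0, hst.tail ⟨l, hs⟩⟩

lemma delay_clk {m : P → ℕ} {ν : T → ℝ} {g : T → Prop} {θ : ℝ} (hθ : 0 ≤ θ)
    (hg : ∀ j, g j → enabled N m j ∧ ν j = 0)
    (hbound : ∀ j, enabled N m j → θ ≤ ν j) :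
    (fun k' => if enabled (N2 N) (mark N m g) k' then clk N ν g k' - θ else 0)
      = clk N (fun k => if enabled N m k then ν k - θ else 0) g := by
  funext k'
  rcases k' with j | c
  · simp only [clk_inl, en2_inl]
    by_cases hgj : g j <;> by_cases hej : enabled N m j <;> simp [hgj, hej]
  · simp only [clk_inr]
    by_cases hec : enabled (N2 N) (mark N m g) (Sum.inr c)
    · obtain ⟨t', mh, S⟩ := c
      obtain ⟨-, hgt', -⟩ := en2_inr.mp hec
      have h1 := hbound t' (hg t' hgt').1
      rw [(hg t' hgt').2] at h1
      simp [hec, le_antisymm h1 hθ]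
    · simp [hec]

lemma simAB (htpn : IsTPN N) : WeakSim (SG N) (labelledSG (N2 N) (lab N)) (RR N) := by
  rintro ⟨m, ν⟩ α ⟨m₂, ν₂⟩ hstep ⟨μ₂, κ₂⟩ ⟨hre, g, hg, hμ, hκ⟩
  obtain ⟨hgood, hnn⟩ := reach_good hre
  have hre' : (SG N).Reach (m₂, ν₂) := reach_tail hre (l := α) hstep
  subst hμ hκ
  have hmem : m ∈ Mset N := ⟨ν, hre⟩
  cases α with
  | silent => exact hstep.elim
  | disc t =>
    have hm₂ : m₂ = fire N m t := hstep.2.2.1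
    subst hm₂
    have hclk : ∀ j, g j ∨ j = t → pers N (m, ν).1 t j →
        enabled N (fire N m t) j ∧ ν₂ j = 0 := by
      intro j hj hpj
      refine ⟨pers_enabled_fire hpj, ?_⟩
      have := (htpn.1 j (fire N m t) (ν j) (ν₂ j) (hnn j)).mp (hstep.2.2.2.1 j hpj)
      rcases hj with hj | rfl
      · exact this.trans (hg j hj).2
      · exact absurd rfl hpj.1
    by_cases hgt : g t
    · refine ⟨(mark N (fire N m t) (fun j => g j ∧ pers N m t j),
        clk N ν₂ (fun j => g j ∧ pers N m t j)),
        ⟨_, Relation.ReflTransGen.refl,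
          ⟨Sum.inr (t, ⟨m, hmem⟩, fun j => @decide (g j) (Classical.propDecidable _)), rfl,
            step_vis2 hmem htpn hgood hnn hg hgt hstep⟩⟩,
        hre', (fun j => g j ∧ pers N m t j),
        fun j (hj : g j ∧ pers N m t j) => hclk j (Or.inl hj.1) hj.2, rfl, rfl⟩
    · refine ⟨(mark N (fire N m t) (fun j => (g j ∨ j = t) ∧ pers N m t j),
        clk N ν₂ (fun j => (g j ∨ j = t) ∧ pers N m t j)),
        ⟨(mark N m (fun j => g j ∨ j = t), clk N ν (fun j => g j ∨ j = t)),
          Relation.ReflTransGen.single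
            ⟨Sum.inl t, rfl, step_silent2 hstep.1 hgt hstep.2.1 hgood hnn⟩,
          ⟨Sum.inr (t, ⟨m, hmem⟩,
              fun j => @decide (g j ∨ j = t) (Classical.propDecidable _)), rfl,
            step_vis2 hmem htpn hgood hnn
              (fun j (hj : g j ∨ j = t) => hj.elim (hg j) (by rintro rfl; exact ⟨hstep.1, hstep.2.1⟩))
              (Or.inr rfl) hstep⟩⟩,
        hre', (fun j => (g j ∨ j = t) ∧ pers N m t j),
        fun j (hj : (g j ∨ j = t) ∧ pers N m t j) => hclk j hj.1 hj.2, rfl, rfl⟩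
  | delay θ =>
    obtain ⟨hθ, hbound, hm₂, hν₂⟩ := hstep
    have hm2 : m₂ = m := hm₂
    have hν2 : ν₂ = fun k => if enabled N m k then ν k - θ else 0 := hν₂
    have hboundB : ∀ k', enabled (N2 N) (mark N m g) k' → θ ≤ clk N ν g k' := by
      rintro (j | ⟨t', mh, S⟩) hen
      · obtain ⟨hj, hgj⟩ := en2_inl.mp hen
        rw [clk_inl, if_neg hgj]
        exact hbound j hj
      · obtain ⟨-, hgt', -⟩ := en2_inr.mp hen
        rw [clk_inr]
        have h1 := hbound t' (hg t' hgt').1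
        rwa [(hg t' hgt').2] at h1
    refine ⟨(mark N m g,
        fun k' => if enabled (N2 N) (mark N m g) k' then clk N ν g k' - θ else 0),
      ⟨_, Relation.ReflTransGen.refl, hθ, hboundB, rfl, rfl⟩,
      hre', g, ?_, ?_, ?_⟩
    · intro j hj
      refine ⟨by rw [hm2]; exact (hg j hj).1, ?_⟩
      show ν₂ j = 0
      have hθ0 : θ = 0 := le_antisymm ((hg j hj).2 ▸ hbound j (hg j hj).1) hθ
      rw [hν2]
      simp only [if_pos (hg j hj).1]
      rw [show ν j = 0 from (hg j hj).2, hθ0, sub_zero]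
    · show mark N m g = mark N m₂ g
      rw [hm2]
    · show _ = clk N ν₂ g
      rw [hν2]
      exact delay_clk hθ hg hbound

lemma simBA (htpn : IsTPN N) :
    WeakSim (labelledSG (N2 N) (lab N)) (SG N) (fun y x => RR N x y) := by
  rintro ⟨μ, κ⟩ α ⟨μ', κ'⟩ hstep ⟨m, ν⟩ ⟨hre, g, hg, hμ, hκ⟩
  obtain ⟨hgood, hnn⟩ := reach_good hre
  dsimp only at hgood hnn hg
  have hμ1 : μ = mark N m g := hμ
  have hκ1 : κ = clk N ν g := hκ
  subst hμ1 hκ1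
  cases α with
  | silent =>
    obtain ⟨t', hlab, hd⟩ := hstep
    rcases t' with k | c
    swap
    · obtain ⟨_, _, _⟩ := c; simp [lab] at hlab
    obtain ⟨hk, hgk⟩ := en2_inl.mp hd.1
    have hνk : ν k = 0 := by
      have h0 : clk N ν g (Sum.inl k) = 0 := hd.2.1
      rwa [clk_inl, if_neg hgk] at h0
    have hμ' : μ' = mark N m (fun j => g j ∨ j = k) := by
      have h1 : μ' = fire (N2 N) (mark N m g) (Sum.inl k) := hd.2.2.1
      rw [h1, fire2_inl hk hgk]
    have hκ' : κ' = clk N ν (fun j => g j ∨ j = k) := by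
      funext k'
      rcases k' with j | c
      · rw [clk_inl]
        by_cases hgj : g j ∨ j = k
        · rw [if_pos hgj]
          refine hd.2.2.2.2.2 (Sum.inl j) ?_
          rw [hμ', en2_inl]
          rintro ⟨-, h2⟩
          exact h2 hgj
        · rw [if_neg hgj]
          by_cases hej : enabled N m j
          · have hp := pers2_inl_inl.mpr
              ⟨fun h => hgj (Or.inr h), hej, fun h => hgj (Or.inl h)⟩
            have h2 := hd.2.2.2.1 (Sum.inl j) hp
            dsimp only at h2
            rw [idyn2_mem, clk_inl, if_neg (fun h => hgj (Or.inl h)),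
              max_eq_left (hnn j)] at h2
            exact h2
          · rw [show ν j = (0:ℝ) from hgood j hej]
            refine hd.2.2.2.2.2 (Sum.inl j) ?_
            rw [hμ', en2_inl]
            exact fun h => hej h.1
      · rw [clk_inr]
        by_cases hpc : pers (N2 N) (mark N m g) (Sum.inl k) (Sum.inr c)
        · have h2 := hd.2.2.2.1 (Sum.inr c) hpc
          dsimp only at h2
          rw [idyn2_mem, clk_inr] at h2
          simpa using h2
        · by_cases hec : enabled (N2 N) μ' (Sum.inr c)
          · have h2 := hd.2.2.2.2.1 (Sum.inr c) hec hpc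
            obtain ⟨tc, mhc, Sc⟩ := c
            rwa [Is2_inr, ptI_mem] at h2
          · exact hd.2.2.2.2.2 (Sum.inr c) hec
    refine ⟨(m, ν), Relation.ReflTransGen.refl, hre, (fun j => g j ∨ j = k), ?_, hμ', hκ'⟩
    rintro j (hj | rfl)
    · exact hg j hj
    · exact ⟨hk, hνk⟩
  | disc t =>
    obtain ⟨t', hlab, hd⟩ := hstep
    rcases t' with k | ⟨t₂, mh, S⟩
    · simp [lab] at hlab
    have ht₂ : t₂ = t := Option.some.inj hlab
    subst ht₂
    obtain ⟨hmh, hgt, hSg⟩ := en2_inr.mp hd.1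
    have hS : ∀ j, AfS N m t₂ j → j ≠ t₂ → (S j = true ↔ g j) := by
      intro j hA hjt
      refine ⟨(hSg j hA).1, fun hgj => ?_⟩
      cases hSb : S j
      · exact absurd hgj ((hSg j hA).2 hSb hjt)
      · rfl
    have henT : enabled N m t₂ := (hg t₂ hgt).1
    have hνt : ν t₂ = 0 := (hg t₂ hgt).2
    have hμ' : μ' = mark N (fire N m t₂) (fun j => g j ∧ pers N m t₂ j) := by
      have h1 : μ' = fire (N2 N) (mark N m g) (Sum.inr (t₂, mh, S)) := hd.2.2.1
      rw [h1, fire2_inr hmh hgt hS (fun j hj => (hg j hj).1)]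
    have hκpers : ∀ j, pers N m t₂ j → ¬ g j → κ' (Sum.inl j) = ν j := by
      intro j hpj hgj
      have hp2 := (pers2_inr_inl hmh hgt hS).mpr ⟨hpj.2.1, hgj, hpj⟩
      have h2 := hd.2.2.2.1 _ hp2
      dsimp only at h2
      rw [idyn2_mem, clk_inl, if_neg hgj, max_eq_left (hnn j)] at h2
      exact h2
    have hκdis : ∀ j, ¬ (enabled N (fire N m t₂) j ∧ ¬ (g j ∧ pers N m t₂ j)) →
        κ' (Sum.inl j) = 0 := by
      intro j h
      refine hd.2.2.2.2.2 (Sum.inl j) ?_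
      rw [hμ', en2_inl]
      exact h
    have hA : discStep N (m, ν) t₂ (fire N m t₂, fun j => κ' (Sum.inl j)) := by
      refine ⟨henT, hνt, rfl, ?_, ?_, ?_⟩
      · intro j hpj
        rw [htpn.1 j (fire N m t₂) (ν j) _ (hnn j)]
        show κ' (Sum.inl j) = ν j
        by_cases hgj : g j
        · rw [hκdis j (fun hc => hc.2 ⟨hgj, hpj⟩)]
          exact ((hg j hgj).2).symm
        · exact hκpers j hpj hgj
      · intro j hej hpj
        rw [htpn.2 j (fire N m t₂) N.m0]
        have hen2 : enabled (N2 N) μ' (Sum.inl j) := by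
          rw [hμ']
          exact en2_inl.mpr ⟨hej, fun hc => hpj hc.2⟩
        have hnp2 : ¬ pers (N2 N) (mark N m g) (Sum.inr (t₂, mh, S)) (Sum.inl j) :=
          fun hc => hpj ((pers2_inr_inl hmh hgt hS).mp hc).2.2
        exact hd.2.2.2.2.1 _ hen2 hnp2
      · intro j hej
        exact hκdis j (fun hc => hej hc.1)
    have hκ' : κ' = clk N (fun j => κ' (Sum.inl j)) (fun j => g j ∧ pers N m t₂ j) := by
      funext k'
      rcases k' with j | c
      · rw [clk_inl]
        by_cases hgj : g j ∧ pers N m t₂ j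
        · rw [if_pos hgj, hκdis j (fun hc => hc.2 hgj)]
        · rw [if_neg hgj]
      · rw [clk_inr]
        by_cases hec : enabled (N2 N) μ' (Sum.inr c)
        · have h2 := hd.2.2.2.2.1 _ hec (not_pers2_inr_inr hmh)
          obtain ⟨tc, mhc, Sc⟩ := c
          rwa [Is2_inr, ptI_mem] at h2
        · exact hd.2.2.2.2.2 _ hec
    refine ⟨(fire N m t₂, fun j => κ' (Sum.inl j)),
      ⟨(m, ν), Relation.ReflTransGen.refl, hA⟩,
      reach_tail (A := SG N) (l := TLabel.disc t₂) hre hA,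
      (fun j => g j ∧ pers N m t₂ j), ?_, hμ', hκ'⟩
    intro j (hj : g j ∧ pers N m t₂ j)
    exact ⟨pers_enabled_fire hj.2, hκdis j (fun hc => hc.2 hj)⟩
  | delay θ =>
    obtain ⟨hθ, hbound2, hμ'1, hκ'2⟩ := hstep
    have hmem : m ∈ Mset N := ⟨ν, hre⟩
    have hboundA : ∀ j, enabled N m j → θ ≤ ν j := by
      intro j hej
      by_cases hgj : g j
      · have hec : enabled (N2 N) (mark N m g)
            (Sum.inr (j, ⟨m, hmem⟩, fun i => @decide (g i) (Classical.propDecidable _))) :=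
          en2_inr.mpr ⟨rfl, hgj, fun i _ => ⟨fun h => decide_eq_true_iff.mp h,
            fun h _ hgi => by rw [decide_eq_true_iff.mpr hgi] at h; exact Bool.noConfusion h⟩⟩
        have h1 := hbound2 _ hec
        dsimp only at h1
        rw [clk_inr] at h1
        exact h1.trans (hnn j)
      · have h1 := hbound2 _ (en2_inl.mpr ⟨hej, hgj⟩)
        dsimp only at h1
        rwa [clk_inl, if_neg hgj] at h1
    have hA : delayStep N (m, ν) θ (m, fun k => if enabled N m k then ν k - θ else 0) :=
      ⟨hθ, hboundA, rfl, rfl⟩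
    have hμ'' : μ' = mark N m g := hμ'1
    have hκ'' : κ' = clk N (fun k => if enabled N m k then ν k - θ else 0) g := by
      have h2 : κ' = fun k' => if enabled (N2 N) (mark N m g) k' then clk N ν g k' - θ else 0 :=
        hκ'2
      rw [h2]
      exact delay_clk hθ hg hboundA
    refine ⟨(m, fun k => if enabled N m k then ν k - θ else 0),
      ⟨(m, ν), Relation.ReflTransGen.refl, hA⟩,
      reach_tail (A := SG N) (l := TLabel.delay θ) hre hA, g, ?_, hμ'', hκ''⟩
    intro j hj
    refine ⟨(hg j hj).1, ?_⟩
    have hθ0 : θ = 0 := le_antisymm ((hg j hj).2 ▸ hboundA j (hg j hj).1) hθ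
    show (if enabled N m j then ν j - θ else 0) = 0
    rw [if_pos (hg j hj).1, show ν j = 0 from (hg j hj).2, hθ0, sub_zero]

lemma initAB : ∀ s₁ ∈ (SG N).init, ∃ s₂ ∈ (labelledSG (N2 N) (lab N)).init, RR N s₁ s₂ := by
  rintro ⟨m, ν⟩ ⟨hm, hen, hnen⟩
  dsimp only at hm hen hnen
  subst hm
  refine ⟨(mark N N.m0 (fun _ => False), clk N ν (fun _ => False)), ⟨m0_eq.symm, ?_, ?_⟩, ?_⟩
  · rintro (k | c) hk
    · rw [m0_eq] at hk
      obtain ⟨h1, -⟩ := en2_inl.mp hk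
      dsimp only
      rw [Is2_inl, clk_inl, if_neg not_false]
      exact hen k h1
    · rw [m0_eq] at hk
      obtain ⟨tc, mhc, Sc⟩ := c
      exact absurd (en2_inr.mp hk).2.1 not_false
  · rintro (k | c) hk
    · dsimp only
      rw [clk_inl, if_neg not_false]
      refine hnen k (fun h1 => hk ?_)
      rw [m0_eq]
      exact en2_inl.mpr ⟨h1, not_false⟩
    · dsimp only
      rw [clk_inr]
  · exact ⟨⟨(N.m0, ν), ⟨rfl, hen, hnen⟩, Relation.ReflTransGen.refl⟩, fun _ => False,
      fun j h => h.elim, rfl, rfl⟩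

lemma initBA : ∀ s₂ ∈ (labelledSG (N2 N) (lab N)).init, ∃ s₁ ∈ (SG N).init, RR N s₁ s₂ := by
  rintro ⟨μ, κ⟩ ⟨hμ0, hen2, hnen2⟩
  dsimp only at hμ0 hen2 hnen2
  subst hμ0
  set ν : T → ℝ := fun k => if enabled N N.m0 k then κ (Sum.inl k) else 0 with hν
  have hinit : initState N (N.m0, ν) := by
    refine ⟨rfl, fun k hk => ?_, fun k hk => if_neg hk⟩
    show (N.Is k N.m0).mem (ν k)
    simp only [hν, if_pos hk]
    have h1 := hen2 (Sum.inl k) (by rw [m0_eq]; exact en2_inl.mpr ⟨hk, not_false⟩)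
    rwa [Is2_inl] at h1
  refine ⟨(N.m0, ν), hinit, ⟨(N.m0, ν), hinit, Relation.ReflTransGen.refl⟩,
    fun _ => False, fun j h => h.elim, m0_eq, ?_⟩
  funext k'
  rcases k' with j | c
  · show κ (Sum.inl j) = clk N ν (fun _ => False) (Sum.inl j)
    rw [clk_inl, if_neg not_false]
    simp only [hν]
    by_cases hj : enabled N N.m0 j
    · rw [if_pos hj]
    · rw [if_neg hj]
      refine hnen2 (Sum.inl j) (fun h => hj ?_)
      rw [m0_eq] at h
      exact (en2_inl.mp h).1
  · show κ (Sum.inr c) = clk N ν (fun _ => False) (Sum.inr c)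
    rw [clk_inr]
    refine hnen2 (Sum.inr c) (fun h => ?_)
    rw [m0_eq] at h
    obtain ⟨tc, mhc, Sc⟩ := c
    exact (en2_inr.mp h).2.1

lemma onesafe2 (htpn : IsTPN N) : OneSafe (N2 N) := by
  have key : ∀ s, (SG (N2 N)).Reach s → ∃ s₁, RR N s₁ s := by
    rintro s ⟨s0, h0, hst⟩
    induction hst with
    | refl =>
      obtain ⟨s₁, -, hR⟩ := initBA s0 h0
      exact ⟨s₁, hR⟩
    | @tail b c hab hbc ih =>
      obtain ⟨s₁, hR⟩ := ih
      obtain ⟨l, hl⟩ := hbc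
      have : ∃ α, (labelledSG (N2 N) (lab N)).step b α c := by
        match l with
        | TLabel.silent => exact hl.elim
        | TLabel.delay θ => exact ⟨TLabel.delay θ, hl⟩
        | TLabel.disc t' =>
          match t' with
          | Sum.inl k => exact ⟨TLabel.silent, ⟨Sum.inl k, rfl, hl⟩⟩
          | Sum.inr (t, mh, S) => exact ⟨TLabel.disc t, ⟨Sum.inr (t, mh, S), rfl, hl⟩⟩
      obtain ⟨α, hα⟩ := this
      obtain ⟨s₁', -, hR'⟩ := simBA htpn b α c hα s₁ hR
      exact ⟨s₁', hR'⟩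
  intro s hs p
  obtain ⟨s₁, -, g, -, hμ, -⟩ := key s hs
  rw [hμ]
  rcases p with m' | j | j
  · rw [mark_pl]; split_ifs <;> omega
  · rw [mark_tk]; split_ifs <;> omega
  · rw [mark_go]; split_ifs <;> omega

end Lemmas

end OneSafeConstruction
/-- **Corollary 1 of the paper.** For every Time Petri Net `N` with a finite
set of reachable markings, there is a 1-safe Time Petri Net `N'` over finite
sets of places and transitions, with a labelling of its transitions by
`T ∪ {τ̂}`, whose labelled state graph is weakly timed bisimilar to the state
graph of `N`. -/
theorem TPN_equiv_one_safe_TPN {P T : Type} [Fintype P] [Fintype T]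
    (N : DTPN P T) (htpn : IsTPN N) (hfin : FiniteMarkings N) :
    ∃ (P' T' : Type) (_ : Fintype P') (_ : Fintype T') (N' : DTPN P' T')
      (ℓ : T' → Option T),
      IsTPN N' ∧ OneSafe N' ∧ Bisimilar (SG N) (labelledSG N' ℓ) := by
  classical
  letI : Fintype ↥(OneSafeConstruction.Mset N) := hfin.fintype
  letI : DecidableEq T := Classical.decEq T
  refine ⟨OneSafeConstruction.P2 N, OneSafeConstruction.T2 N, inferInstance, inferInstance,
    OneSafeConstruction.N2 N, OneSafeConstruction.lab N,
    ⟨?_, ?_⟩, OneSafeConstruction.onesafe2 htpn,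
    OneSafeConstruction.RR N, OneSafeConstruction.simAB htpn,
    OneSafeConstruction.simBA htpn,
    OneSafeConstruction.initAB, OneSafeConstruction.initBA⟩
  · intro t m θ x hθ
    rw [OneSafeConstruction.idyn2_mem, max_eq_left hθ]
  · intro t m m'
    rcases t with k | c <;> rfl

end
end

section
/- Let f, g : ℝ → ℝ be monotone nondecreasing functions, and let κ_i ≤ λ_i, κ_j ≤ λ_j and μ be real numbers satisfying κ_i ≤ κ_j + μ, κ_j + μ ≤ λ_i and λ_i ≤ λ_j + μ. Let S = {(x, y) ∈ ℝ² : κ_i ≤ x ≤ λ_i, κ_j ≤ y ≤ λ_j, x − y ≤ μ}. Then the supremum of f(x) − g(y) over (x, y) ∈ S equals the supremum of f(θ) − g(θ − μ) over θ ∈ [κ_j + μ, λ_i]. -/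
/-- **Reduction (C2).** For monotone nondecreasing `f, g : ℝ → ℝ` and a
closure-form difference-constraint domain
`S = {(x,y) : κᵢ ≤ x ≤ λᵢ, κⱼ ≤ y ≤ λⱼ, x − y ≤ μ}` (with tight bounds, i.e.
`κᵢ ≤ κⱼ + μ ≤ λᵢ ≤ λⱼ + μ`), the supremum of `f x − g y` over `S` equals the
supremum of `f θ − g (θ − μ)` over `θ ∈ [κⱼ + μ, λᵢ]`. -/
theorem sup_diff_over_domain_eq_sup_on_interval
    (f g : ℝ → ℝ) (hf : Monotone f) (hg : Monotone g)
    (κi li κj lj μ : ℝ)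
    (hij : κi ≤ li) (hjj : κj ≤ lj)
    (h1 : κi ≤ κj + μ) (h2 : κj + μ ≤ li) (h3 : li ≤ lj + μ) :
    sSup ((fun p : ℝ × ℝ => f p.1 - g p.2) ''
        {p : ℝ × ℝ | κi ≤ p.1 ∧ p.1 ≤ li ∧ κj ≤ p.2 ∧ p.2 ≤ lj ∧ p.1 - p.2 ≤ μ}) =
      sSup ((fun θ : ℝ => f θ - g (θ - μ)) '' Set.Icc (κj + μ) li) := by
  set S : Set (ℝ × ℝ) :=
    {p : ℝ × ℝ | κi ≤ p.1 ∧ p.1 ≤ li ∧ κj ≤ p.2 ∧ p.2 ≤ lj ∧ p.1 - p.2 ≤ μ}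
  -- the diagonal image is contained in the full image
  have hsub : (fun θ : ℝ => f θ - g (θ - μ)) '' Set.Icc (κj + μ) li ⊆
      (fun p : ℝ × ℝ => f p.1 - g p.2) '' S := by
    rintro _ ⟨θ, ⟨hθ1, hθ2⟩, rfl⟩
    exact ⟨(θ, θ - μ), ⟨h1.trans hθ1, hθ2, by simp only; linarith, by simp only; linarith, by simp only; linarith⟩, rfl⟩
  have hS_bdd : BddAbove ((fun p : ℝ × ℝ => f p.1 - g p.2) '' S) := by
    refine ⟨f li - g κj, ?_⟩
    rintro _ ⟨⟨x, y⟩, ⟨hx1, hx2, hy1, hy2, hxy⟩, rfl⟩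
    have := hf hx2; have := hg hy1
    simp only at *
    linarith
  have hS_ne : ((fun p : ℝ × ℝ => f p.1 - g p.2) '' S).Nonempty := by
    exact ⟨_, hsub ⟨κj + μ, Set.left_mem_Icc.2 h2, rfl⟩⟩
  have hI_bdd : BddAbove ((fun θ : ℝ => f θ - g (θ - μ)) '' Set.Icc (κj + μ) li) := by
    refine ⟨f li - g κj, ?_⟩
    rintro _ ⟨θ, ⟨hθ1, hθ2⟩, rfl⟩
    have := hf hθ2
    have := hg (show κj ≤ θ - μ by linarith)
    simp only
    linarith
  have hI_ne : ((fun θ : ℝ => f θ - g (θ - μ)) '' Set.Icc (κj + μ) li).Nonempty :=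
    ⟨_, ⟨κj + μ, Set.left_mem_Icc.2 h2, rfl⟩⟩
  apply le_antisymm
  · apply csSup_le hS_ne
    rintro _ ⟨⟨x, y⟩, ⟨hx1, hx2, hy1, hy2, hxy⟩, rfl⟩
    have hθmem : max x (κj + μ) ∈ Set.Icc (κj + μ) li :=
      ⟨le_max_right _ _, max_le hx2 h2⟩
    refine le_trans ?_ (le_csSup hI_bdd ⟨_, hθmem, rfl⟩)
    have h4 : f x ≤ f (max x (κj + μ)) := hf (le_max_left _ _)
    have h5 : g (max x (κj + μ) - μ) ≤ g y := by
      apply hg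
      rcases max_cases x (κj + μ) with ⟨h, _⟩ | ⟨h, _⟩ <;> rw [h] <;> simp only at hxy ⊢ <;> linarith
    simp only at *
    linarith
  · exact csSup_le_csSup hS_bdd hI_ne hsub
end
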